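/- arXiv:1810.06335 — 6 statements merged into one kernel-verified Lean document; each statement's English description precedes it below -/
import Mathlib

section
/- In the independent lognormal futures model, for every initial temperature index price y > 0 the map y ↦ ∫∫ g(F^E(x,u))·h(F^I(y,v)) dμ(u,v) is differentiable at y, and its derivative (the temperature delta Δ_I) is given by Δ_I = ∫∫ g(F^E(x,u))·h(F^I(y,v)) · v/(y·σ_I·T) dμ(u,v), i.e. the Malliavin weight is π^{Δ_I}(v) = v/(y σ_I T). -/
open MeasureTheory ProbabilityTheory Real Filter

lemma int_exp_lin_sq (a b : ℝ) (hb : 0 < b) :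
    Integrable (fun v : ℝ => Real.exp (a * v - b * v ^ 2)) := by
  have heq : (fun v : ℝ => Real.exp (a * v - b * v ^ 2))
      = fun v => Real.exp (a ^ 2 / (4 * b)) * Real.exp (-b * (v - a / (2 * b)) ^ 2) := by
    funext v
    rw [← Real.exp_add]
    congr 1
    field_simp
    ring
  rw [heq]
  exact ((integrable_exp_neg_mul_sq hb).comp_sub_right (a / (2 * b))).const_mul _

lemma int_exp_abs (a T : ℝ) (hT : 0 < T) :
    Integrable (fun v : ℝ => Real.exp (a * |v| - v ^ 2 / (2 * T))) := by
  have hb : 0 < (2 * T)⁻¹ := by positivity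
  have h1 := int_exp_lin_sq a (2 * T)⁻¹ hb
  have h2 := int_exp_lin_sq (-a) (2 * T)⁻¹ hb
  refine (h1.add h2).mono ?_ ?_
  · exact (Continuous.rexp (by continuity)).aestronglyMeasurable
  · refine Filter.Eventually.of_forall fun v => ?_
    have hsq : v ^ 2 / (2 * T) = (2 * T)⁻¹ * v ^ 2 := by ring
    rw [Real.norm_eq_abs, abs_of_pos (Real.exp_pos _), Real.norm_eq_abs]
    have hsum : Real.exp (a * |v| - (2 * T)⁻¹ * v ^ 2)
        ≤ Real.exp (a * v - (2 * T)⁻¹ * v ^ 2) + Real.exp (-a * v - (2 * T)⁻¹ * v ^ 2) := by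
      rcases abs_cases v with ⟨hv, _⟩ | ⟨hv, _⟩
      · rw [hv]
        exact le_add_of_nonneg_right (Real.exp_pos _).le
      · rw [hv]
        calc Real.exp (a * -v - (2 * T)⁻¹ * v ^ 2)
            = Real.exp (-a * v - (2 * T)⁻¹ * v ^ 2) := by ring_nf
          _ ≤ _ := le_add_of_nonneg_left (Real.exp_pos _).le
    rw [hsq]
    refine hsum.trans (le_abs_self _)

lemma gaussian_integral_eq (V : NNReal) (hV : V ≠ 0) (f : ℝ → ℝ) :
    ∫ v, f v ∂(gaussianReal 0 V) = ∫ v, gaussianPDFReal 0 V v * f v := by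
  rw [gaussianReal_of_var_ne_zero 0 hV]
  have hd : gaussianPDF 0 V = fun x => (((gaussianPDFReal 0 V x).toNNReal : NNReal) : ENNReal) := rfl
  rw [hd, integral_withDensity_eq_integral_smul ((measurable_gaussianPDFReal 0 V).real_toNNReal)]
  congr 1
  funext v
  rw [NNReal.smul_def, Real.coe_toNNReal _ (gaussianPDFReal_nonneg _ _ _)]
  rfl

set_option maxHeartbeats 1000000 in
lemma oneDim (T σ : ℝ) (hT : 0 < T) (hσ : 0 < σ)
    (h : ℝ → ℝ) (hh : Measurable h)
    (C : ℝ) (p : ℕ) (hC : 0 ≤ C) (hhb : ∀ z : ℝ, |h z| ≤ C * (1 + |z|) ^ p)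
    (c y : ℝ) (hy : 0 < y) :
    HasDerivAt
      (fun y' : ℝ => ∫ v, h (y' * Real.exp (σ * v - c)) ∂(gaussianReal 0 T.toNNReal))
      (∫ v, h (y * Real.exp (σ * v - c)) * (v / (y * σ * T)) ∂(gaussianReal 0 T.toNNReal)) y := by
  have hV0 : T.toNNReal ≠ 0 := by
    simp only [ne_eq, Real.toNNReal_eq_zero, not_le]
    exact hT
  have hVT : ((T.toNNReal : ℝ)) = T := Real.coe_toNNReal T hT.le
  set φ : ℝ → ℝ := fun u => (Real.sqrt (2 * π * T))⁻¹ * Real.exp (-u ^ 2 / (2 * T)) with hφdef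
  have hφ_eq : gaussianPDFReal 0 T.toNNReal = φ := by
    rw [gaussianPDFReal_def]
    funext u
    simp [hVT, hφdef]
  have h2πT : (0:ℝ) < 2 * π * T := by positivity
  have hc₀ : (0:ℝ) < (Real.sqrt (2 * π * T))⁻¹ := by positivity
  have hφpos : ∀ u, 0 < φ u := fun u => by positivity
  have hφm : Measurable φ := by
    rw [← hφ_eq]; exact measurable_gaussianPDFReal 0 T.toNNReal
  have hφ' : ∀ u : ℝ, HasDerivAt φ (φ u * (-(u / T))) u := by
    intro u
    have h1 : HasDerivAt (fun u : ℝ => -u ^ 2 / (2 * T)) (-(u / T)) u := by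
      have := ((hasDerivAt_pow 2 u).neg).div_const (2 * T)
      convert this using 1
      · rfl
      · rfl
      · rfl
      field_simp
      ring
    have h2 := (h1.exp).const_mul (Real.sqrt (2 * π * T))⁻¹
    convert h2 using 1
    · rfl
    · rfl
    simp only [hφdef]
    ring
  set δ : ℝ → ℝ := fun y' => (Real.log y - Real.log y') / σ with hδdef
  have hδy : δ y = 0 := by simp [hδdef]
  have hδ' : ∀ y' : ℝ, y' ≠ 0 → HasDerivAt δ (-(1 / (σ * y'))) y' := by
    intro y' hy'
    have := ((Real.hasDerivAt_log hy').const_sub (Real.log y)).div_const σ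
    convert this using 1
    · rfl
    · rfl
    field_simp
  set F : ℝ → ℝ → ℝ := fun y' v => h (y * Real.exp (σ * v - c)) * φ (v + δ y') with hFdef
  set F' : ℝ → ℝ → ℝ :=
    fun y' v => h (y * Real.exp (σ * v - c)) * (φ (v + δ y') * ((v + δ y') / (T * σ * y')))
    with hF'def
  have hball : ∀ y' ∈ Metric.ball y (y / 2), y / 2 < y' ∧ y' < 3 * y / 2 := by
    intro y' hy'
    rw [Metric.mem_ball, Real.dist_eq, abs_lt] at hy'
    constructor <;> linarith [hy'.1, hy'.2]
  have hballpos : ∀ y' ∈ Metric.ball y (y / 2), 0 < y' := by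
    intro y' hy'
    have := (hball y' hy').1
    linarith
  -- derivative pointwise
  have key : ∀ v : ℝ, ∀ y' ∈ Metric.ball y (y / 2),
      HasDerivAt (fun t => F t v) (F' y' v) y' := by
    intro v y' hy'
    have hy'pos := hballpos y' hy'
    have h1 : HasDerivAt (fun t => v + δ t) (-(1 / (σ * y'))) y' :=
      (hδ' y' hy'pos.ne').const_add v
    have h2 : HasDerivAt (fun t => φ (v + δ t))
        (φ (v + δ y') * (-((v + δ y') / T)) * (-(1 / (σ * y')))) y' :=
      by have := (hφ' (v + δ y')).comp y' h1; exact this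
    have h3 := h2.const_mul (h (y * Real.exp (σ * v - c)))
    convert h3 using 1
    · rfl
    · rfl
    simp only [hF'def]
    field_simp
  -- bound constants
  set E : ℝ := Real.log 2 / σ with hEdef
  have hE : 0 < E := div_pos (Real.log_pos one_lt_two) hσ
  have hδbound : ∀ y' ∈ Metric.ball y (y / 2), |δ y'| ≤ E := by
    intro y' hy'
    obtain ⟨hl, hr⟩ := hball y' hy'
    have hy'pos := hballpos y' hy'
    have hlog1 : Real.log y' ≤ Real.log y + Real.log 2 := by
      have h2 : Real.log y' ≤ Real.log (2 * y) := Real.log_le_log hy'pos (by linarith)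
      rw [Real.log_mul two_ne_zero hy.ne'] at h2
      linarith
    have hlog2 : Real.log y - Real.log 2 ≤ Real.log y' := by
      have h2 : Real.log (y / 2) ≤ Real.log y' := Real.log_le_log (by positivity) hl.le
      rwa [Real.log_div hy.ne' two_ne_zero] at h2
    rw [hδdef]
    rw [abs_div, abs_of_pos hσ, div_le_div_iff_of_pos_right hσ]
    rw [abs_le]
    constructor <;> linarith
  set C₁ : ℝ := C * (1 + y) ^ p * Real.exp (p * |c|) with hC₁def
  have hC₁ : 0 ≤ C₁ := by positivity
  have habs_h : ∀ v : ℝ, |h (y * Real.exp (σ * v - c))| ≤ C₁ * Real.exp (p * σ * |v|) := by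
    intro v
    refine (hhb _).trans ?_
    have hz : (0:ℝ) < y * Real.exp (σ * v - c) := by positivity
    have hb1 : 1 + y * Real.exp (σ * v - c) ≤ (1 + y) * Real.exp (σ * |v| + |c|) := by
      have he1 : Real.exp (σ * v - c) ≤ Real.exp (σ * |v| + |c|) := by
        apply Real.exp_le_exp.mpr
        have h1 : σ * v ≤ σ * |v| := mul_le_mul_of_nonneg_left (le_abs_self v) hσ.le
        have h2 : -c ≤ |c| := neg_le_abs c
        linarith
      have he2 : (1:ℝ) ≤ Real.exp (σ * |v| + |c|) := Real.one_le_exp (by positivity)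
      nlinarith [hy.le]
    calc C * (1 + |y * Real.exp (σ * v - c)|) ^ p
        = C * (1 + y * Real.exp (σ * v - c)) ^ p := by rw [abs_of_pos hz]
      _ ≤ C * ((1 + y) * Real.exp (σ * |v| + |c|)) ^ p := by
          apply mul_le_mul_of_nonneg_left _ hC
          exact pow_le_pow_left₀ (by positivity) hb1 p
      _ = C₁ * Real.exp (p * σ * |v|) := by
          rw [hC₁def, mul_pow, ← Real.exp_nat_mul, mul_add]
          rw [show (p:ℝ) * (σ * |v|) + p * |c| = p * σ * |v| + p * |c| by ring, Real.exp_add]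
          ring
  set a : ℝ := p * σ + E / T + 1 with hadef
  set M : ℝ := C₁ * ((Real.sqrt (2 * π * T))⁻¹ * ((1 + E) * (2 / (T * σ * y)))) with hMdef
  set bound : ℝ → ℝ := fun v => M * Real.exp (a * |v| - v ^ 2 / (2 * T)) with hbdef
  have h_bound : ∀ v : ℝ, ∀ y' ∈ Metric.ball y (y / 2), ‖F' y' v‖ ≤ bound v := by
    intro v y' hy'
    have hy'pos := hballpos y' hy'
    have hδb := hδbound y' hy'
    set u : ℝ := v + δ y' with hudef
    have hnorm : ‖F' y' v‖
        = |h (y * Real.exp (σ * v - c))| * (φ u * (|u| / (T * σ * y'))) := by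
      simp only [hF'def, Real.norm_eq_abs, abs_mul]
      rw [abs_of_pos (hφpos u), abs_div, abs_of_pos (by positivity : (0:ℝ) < T * σ * y')]
    rw [hnorm]
    have hφb : φ u ≤ (Real.sqrt (2 * π * T))⁻¹ * (Real.exp (E * |v| / T) * Real.exp (-v ^ 2 / (2 * T))) := by
      simp only [hφdef]
      rw [← Real.exp_add]
      apply mul_le_mul_of_nonneg_left _ hc₀.le
      apply Real.exp_le_exp.mpr
      have hu2 : v ^ 2 - 2 * E * |v| ≤ u ^ 2 := by
        have h1 : -(|v| * |δ y'|) ≤ v * δ y' := neg_abs_le _ |>.trans_eq' (by rw [abs_mul])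
        have h1b : -(|v| * E) ≤ v * δ y' :=
          le_trans (neg_le_neg (mul_le_mul_of_nonneg_left hδb (abs_nonneg v))) h1
        calc v ^ 2 - 2 * E * |v| ≤ (v + δ y') ^ 2 := by nlinarith [sq_nonneg (δ y')]
          _ = u ^ 2 := by rw [hudef]
      have : -u ^ 2 ≤ -(v ^ 2) + 2 * E * |v| := by linarith
      calc -u ^ 2 / (2 * T) ≤ (-(v ^ 2) + 2 * E * |v|) / (2 * T) := by
            apply div_le_div_of_nonneg_right this (by positivity) |>.trans_eq rfl
        _ = E * |v| / T + -v ^ 2 / (2 * T) := by field_simp; ring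
    have huabs : |u| ≤ (1 + E) * Real.exp |v| := by
      have h1 : |u| ≤ |v| + E := (abs_add_le _ _).trans (by linarith)
      have h2 : |v| ≤ Real.exp |v| := by
        have := Real.add_one_le_exp |v|
        linarith
      have h3 : (1:ℝ) ≤ Real.exp |v| := Real.one_le_exp (abs_nonneg v)
      nlinarith [hE.le]
    have hyq : |u| / (T * σ * y') ≤ ((1 + E) * Real.exp |v|) * (2 / (T * σ * y)) := by
      have hAB : T * σ * (y / 2) ≤ T * σ * y' :=
        mul_le_mul_of_nonneg_left (hball y' hy').1.le (by positivity)
      have hinv : (T * σ * y')⁻¹ ≤ (T * σ * (y / 2))⁻¹ :=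
        inv_anti₀ (by positivity) hAB
      have heq : (T * σ * (y / 2))⁻¹ = 2 / (T * σ * y) := by
        field_simp
      have hstep : |u| / (T * σ * y') ≤ |u| * (2 / (T * σ * y)) := by
        rw [div_eq_mul_inv]
        exact mul_le_mul_of_nonneg_left (hinv.trans_eq heq) (abs_nonneg u)
      refine hstep.trans ?_
      exact mul_le_mul_of_nonneg_right huabs (by positivity)
    calc |h (y * Real.exp (σ * v - c))| * (φ u * (|u| / (T * σ * y')))
        ≤ (C₁ * Real.exp (p * σ * |v|)) *
          (((Real.sqrt (2 * π * T))⁻¹ * (Real.exp (E * |v| / T) * Real.exp (-v ^ 2 / (2 * T)))) *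
            (((1 + E) * Real.exp |v|) * (2 / (T * σ * y)))) := by
          have hA := habs_h v
          gcongr
      _ = bound v := by
          simp only [hbdef, hMdef]
          rw [show a * |v| - v ^ 2 / (2 * T)
              = (p * σ * |v|) + ((E * |v| / T) + (-v ^ 2 / (2 * T)) + |v|) by
            rw [hadef]; ring]
          rw [Real.exp_add, Real.exp_add, Real.exp_add]
          ring
  have hmeas_h : Measurable fun v : ℝ => h (y * Real.exp (σ * v - c)) := by
    apply hh.comp
    have hm1 : Measurable fun v : ℝ => σ * v - c :=
      (measurable_id.const_mul σ).sub measurable_const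
    exact (Real.measurable_exp.comp hm1).const_mul y
  have hbound_int : Integrable bound := (int_exp_abs a T hT).const_mul M
  have hF_meas : ∀ᶠ y' in nhds y, AEStronglyMeasurable (F y') (volume : Measure ℝ) := by
    refine Eventually.of_forall fun y' => ?_
    apply Measurable.aestronglyMeasurable
    exact hmeas_h.mul (hφm.comp (measurable_id.add_const (δ y')))
  have hF_int : Integrable (F y) := by
    have hbnd : ∀ v : ℝ, ‖F y v‖ ≤ (C₁ * (Real.sqrt (2 * π * T))⁻¹) *
        Real.exp ((p * σ) * |v| - v ^ 2 / (2 * T)) := by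
      intro v
      simp only [hFdef, hδy, add_zero, Real.norm_eq_abs, abs_mul]
      rw [abs_of_pos (hφpos v)]
      calc |h (y * Real.exp (σ * v - c))| * φ v
          ≤ (C₁ * Real.exp (p * σ * |v|)) * φ v :=
            mul_le_mul_of_nonneg_right (habs_h v) (hφpos v).le
        _ = (C₁ * (Real.sqrt (2 * π * T))⁻¹) * Real.exp ((p * σ) * |v| - v ^ 2 / (2 * T)) := by
            simp only [hφdef]
            rw [show (p * σ) * |v| - v ^ 2 / (2 * T) = p * σ * |v| + -v ^ 2 / (2 * T) by ring,
              Real.exp_add]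
            ring
    refine ((int_exp_abs (p * σ) T hT).const_mul (C₁ * (Real.sqrt (2 * π * T))⁻¹)).mono ?_ ?_
    · exact (hmeas_h.mul (hφm.comp (measurable_id.add_const (δ y)))).aestronglyMeasurable
    · refine Eventually.of_forall fun v => (hbnd v).trans (le_abs_self _)
  have hF'_meas : AEStronglyMeasurable (F' y) (volume : Measure ℝ) := by
    apply Measurable.aestronglyMeasurable
    apply hmeas_h.mul
    apply Measurable.mul (hφm.comp (measurable_id.add_const (δ y)))
    exact (measurable_id.add_const (δ y)).div_const _
  have main := hasDerivAt_integral_of_dominated_loc_of_deriv_le (μ := volume)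
    (F := F) (F' := F') (x₀ := y) (bound := bound) (Metric.ball_mem_nhds y (half_pos hy))
    hF_meas hF_int hF'_meas
    (Eventually.of_forall fun v => fun y' hy' => h_bound v y' hy')
    hbound_int
    (Eventually.of_forall fun v => fun y' hy' => key v y' hy')
  have hev : (fun y' : ℝ => ∫ v, h (y' * Real.exp (σ * v - c)) ∂(gaussianReal 0 T.toNNReal))
      =ᶠ[nhds y] fun n => ∫ v, F n v := by
    filter_upwards [eventually_gt_nhds hy] with y' hy'pos
    rw [gaussian_integral_eq _ hV0, hφ_eq]
    have htrans := integral_add_right_eq_self (μ := volume)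
      (fun v => φ v * h (y' * Real.exp (σ * v - c))) (δ y')
    rw [← htrans]
    congr 1
    funext v
    have harg : y' * Real.exp (σ * (v + δ y') - c) = y * Real.exp (σ * v - c) := by
      rw [show σ * (v + δ y') - c = (σ * v - c) + σ * δ y' by ring, Real.exp_add]
      have hδval : σ * δ y' = Real.log y - Real.log y' := by
        rw [hδdef]; field_simp
      have hexp : Real.exp (Real.log y - Real.log y') = y / y' := by
        rw [Real.exp_sub, Real.exp_log hy, Real.exp_log hy'pos]
      rw [hδval, hexp]
      field_simp
    show φ (v + δ y') * h (y' * Real.exp (σ * (v + δ y') - c)) = F y' v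
    rw [harg]
    simp only [hFdef]
    ring
  refine HasDerivAt.congr_of_eventuallyEq ?_ hev
  have hD : (∫ v, h (y * Real.exp (σ * v - c)) * (v / (y * σ * T)) ∂(gaussianReal 0 T.toNNReal))
      = ∫ v, F' y v := by
    rw [gaussian_integral_eq _ hV0, hφ_eq]
    congr 1
    funext v
    simp only [hF'def, hδy, add_zero]
    ring
  rw [hD]
  exact main.2

/-- **Temperature delta in the independent lognormal futures model.**
For every initial temperature index price `y > 0`, the quanto option price
`y ↦ ∫∫ g(Fᴱ(x,u)) h(Fᴵ(y,v)) dμ(u,v)` is differentiable at `y` and its derivative is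
given by the Malliavin-weight formula with weight `π = v / (y σ_I T)`. -/
theorem temperature_delta_independent
    (T σE σI : ℝ) (hT : 0 < T) (hσE : 0 < σE) (hσI : 0 < σI)
    (g h : ℝ → ℝ) (hg : Measurable g) (hh : Measurable h)
    (C : ℝ) (p : ℕ) (hC : 0 ≤ C)
    (hgb : ∀ z : ℝ, |g z| ≤ C * (1 + |z|) ^ p)
    (hhb : ∀ z : ℝ, |h z| ≤ C * (1 + |z|) ^ p)
    (x y : ℝ) (hx : 0 < x) (hy : 0 < y) :
    HasDerivAt
      (fun y' : ℝ =>
        ∫ w : ℝ × ℝ,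
          g (x * Real.exp (σE * w.1 - σE ^ 2 * T / 2)) *
            h (y' * Real.exp (σI * w.2 - σI ^ 2 * T / 2))
          ∂((gaussianReal 0 T.toNNReal).prod (gaussianReal 0 T.toNNReal)))
      (∫ w : ℝ × ℝ,
          g (x * Real.exp (σE * w.1 - σE ^ 2 * T / 2)) *
            h (y * Real.exp (σI * w.2 - σI ^ 2 * T / 2)) *
            (w.2 / (y * σI * T))
        ∂((gaussianReal 0 T.toNNReal).prod (gaussianReal 0 T.toNNReal)))
      y := by
  have hJ := oneDim T σI hT hσI h hh C p hC hhb (σI ^ 2 * T / 2) y hy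
  set γ := gaussianReal 0 T.toNNReal with hγdef
  set G : ℝ → ℝ := fun u => g (x * Real.exp (σE * u - σE ^ 2 * T / 2)) with hGdef
  have H := hJ.const_mul (∫ u, G u ∂γ)
  convert H using 1
  · rfl
  · rfl
  · funext y'
    exact integral_prod_mul (μ := γ) (ν := γ) G
      (fun v => h (y' * Real.exp (σI * v - σI ^ 2 * T / 2)))
  · rw [← integral_prod_mul (μ := γ) (ν := γ) G
      (fun v => h (y * Real.exp (σI * v - σI ^ 2 * T / 2)) * (v / (y * σI * T)))]
    congr 1
    funext w
    ring
end

section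
/- In the independent lognormal futures model, the quanto option price C(x,y) = ∫∫ g(F^E(x,u))·h(F^I(y,v)) dμ(u,v) has a mixed second partial derivative in the two initial prices (the cross-gamma Δ_{EI} = ∂²C/∂x∂y) at every x > 0, y > 0, given by the product-weight formula Δ_{EI} = ∫∫ g(F^E(x,u))·h(F^I(y,v)) · (u·v)/(x·y·σ_E·σ_I·T²) dμ(u,v), i.e. the Malliavin weight is π^{Δ_{EI}}(u,v) = π^{Δ_E}(u)·π^{Δ_I}(v) = u·v/(x y σ_E σ_I T²). -/
open MeasureTheory ProbabilityTheory Real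
open scoped NNReal ENNReal

/-- Integral against a Gaussian measure as a Lebesgue integral against the density. -/
lemma QG.integral_gaussianReal_eq (v : ℝ≥0) (hv : v ≠ 0) (f : ℝ → ℝ) :
    ∫ u, f u ∂(gaussianReal 0 v) = ∫ u, gaussianPDFReal 0 v u * f u := by
  rw [gaussianReal_of_var_ne_zero _ hv]
  have hd : gaussianPDF 0 v = fun u => ((Real.toNNReal (gaussianPDFReal 0 v u) : ℝ≥0) : ℝ≥0∞) :=
    rfl
  rw [hd, integral_withDensity_eq_integral_smul
    ((measurable_gaussianPDFReal 0 v).real_toNNReal) f]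
  congr 1
  ext u
  simp [NNReal.smul_def, Real.coe_toNNReal _ (gaussianPDFReal_nonneg 0 v u)]

/-- Auxiliary integrability: `exp (β|u| - c u²)` is integrable for `c > 0`. -/
lemma QG.integrable_aux {c : ℝ} (β : ℝ) (hc : 0 < c) :
    Integrable (fun u : ℝ => Real.exp (β * |u| - c * u ^ 2)) := by
  have h2 : (0 : ℝ) < c / 2 := by linarith
  refine Integrable.mono' ((integrable_exp_neg_mul_sq h2).const_mul
    (Real.exp (β ^ 2 / (2 * c)))) ?_ ?_
  · exact (Real.measurable_exp.comp
      ((measurable_id.abs.const_mul β).sub ((measurable_id.pow_const 2).const_mul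
        c))).aestronglyMeasurable
  · filter_upwards with u
    rw [Real.norm_eq_abs, abs_of_pos (Real.exp_pos _), ← Real.exp_add]
    apply Real.exp_le_exp.mpr
    have hc2 : (0:ℝ) < 2 * c := by linarith
    have key : β * |u| * (2 * c) ≤ β ^ 2 + c ^ 2 * u ^ 2 := by
      nlinarith [sq_nonneg (c * |u| - β), sq_abs u]
    have key2 : β * |u| ≤ (β ^ 2 + c ^ 2 * u ^ 2) / (2 * c) := by
      rw [le_div_iff₀ hc2]; exact key
    have key3 : (β ^ 2 + c ^ 2 * u ^ 2) / (2 * c) = β ^ 2 / (2 * c) + c / 2 * u ^ 2 := by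
      field_simp
    linarith

/-- **1D Malliavin delta.** In the lognormal model, the price functional
`x ↦ ∫ g (x e^{σu - σ²T/2}) dγ_T(u)` has derivative at `x > 0` given by the Malliavin
weight `u / (x σ T)`. -/
lemma QG.malliavin_delta (T : ℝ) (hT : 0 < T) (σ : ℝ) (hσ : 0 < σ)
    (g : ℝ → ℝ) (hg : Measurable g) (C : ℝ) (p : ℕ) (hC : 0 ≤ C)
    (hgb : ∀ z : ℝ, |g z| ≤ C * (1 + |z|) ^ p) (x : ℝ) (hx : 0 < x) :
    HasDerivAt
      (fun x' : ℝ => ∫ u, g (x' * Real.exp (σ * u - σ ^ 2 * T / 2))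
        ∂(gaussianReal 0 T.toNNReal))
      (∫ u, g (x * Real.exp (σ * u - σ ^ 2 * T / 2)) * (u / (x * σ * T))
        ∂(gaussianReal 0 T.toNNReal)) x := by
  have hv : T.toNNReal ≠ 0 := by
    simp only [ne_eq, Real.toNNReal_eq_zero, not_le]
    exact hT
  have hvT : ((T.toNNReal : ℝ≥0) : ℝ) = T := Real.coe_toNNReal T hT.le
  set v : ℝ≥0 := T.toNNReal with hvdef
  set c : ℝ := σ ^ 2 * T / 2 with hc
  have hc0 : 0 ≤ c := by rw [hc]; positivity
  set s : ℝ := (Real.sqrt (2 * π * T))⁻¹ with hs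
  have hs0 : 0 ≤ s := by rw [hs]; positivity
  set φ : ℝ → ℝ := fun z => s * Real.exp (-z ^ 2 / (2 * T)) with hφ
  have hφeq : gaussianPDFReal 0 v = φ := by
    funext z
    simp [gaussianPDFReal, hvT, hφ, hs]
  have hφmeas : Measurable φ := by
    apply Measurable.const_mul
    exact Real.measurable_exp.comp ((measurable_id.pow_const 2).neg.div_const _)
  have hφnonneg : ∀ z, 0 ≤ φ z := fun z => by
    rw [hφ]; positivity
  set Fn : ℝ → ℝ := fun u => g (Real.exp (σ * u - c)) with hFn
  have hFnmeas : Measurable Fn :=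
    hg.comp (Real.measurable_exp.comp ((measurable_id.const_mul σ).sub_const c))
  set K : ℝ := C * 2 ^ p with hK
  have hK0 : 0 ≤ K := by rw [hK]; positivity
  set b : ℝ := (p : ℝ) * σ with hb
  have hb0 : 0 ≤ b := by rw [hb]; positivity
  -- growth bound on Fn
  have hFnb : ∀ u : ℝ, |Fn u| ≤ K * Real.exp (b * |u|) := by
    intro u
    calc |Fn u| ≤ C * (1 + |Real.exp (σ * u - c)|) ^ p := hgb _
      _ ≤ C * (2 * Real.exp (σ * |u|)) ^ p := by
          apply mul_le_mul_of_nonneg_left _ hC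
          apply pow_le_pow_left₀ (by positivity)
          rw [abs_of_pos (Real.exp_pos _)]
          have h1 : Real.exp (σ * u - c) ≤ Real.exp (σ * |u|) := by
            apply Real.exp_le_exp.mpr
            have h2 := mul_le_mul_of_nonneg_left (le_abs_self u) hσ.le
            linarith
          have h2 : (1 : ℝ) ≤ Real.exp (σ * |u|) :=
            Real.one_le_exp (by positivity)
          linarith
      _ = K * Real.exp (b * |u|) := by
          rw [mul_pow, ← Real.exp_nat_mul, hK, hb, ← mul_assoc]
          ring
  -- translation structure
  have harg : ∀ x' : ℝ, 0 < x' → ∀ u : ℝ,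
      x' * Real.exp (σ * u - c) = Real.exp (σ * (u + Real.log x' / σ) - c) := by
    intro x' hx' u
    conv_lhs => rw [← Real.exp_log hx']
    rw [← Real.exp_add]
    congr 1
    field_simp
    ring
  set a₀ : ℝ := Real.log x / σ with ha₀
  set R : ℝ := |a₀| + 1 with hR
  have hR0 : 0 ≤ R := by rw [hR]; positivity
  -- the translated integral
  have hGeq : ∀ x' : ℝ, 0 < x' →
      (∫ u, g (x' * Real.exp (σ * u - c)) ∂(gaussianReal 0 v))
        = ∫ u, Fn u * φ (u - Real.log x' / σ) := by
    intro x' hx'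
    rw [QG.integral_gaussianReal_eq v hv, hφeq]
    rw [← MeasureTheory.integral_add_right_eq_self
      (fun u => φ u * g (x' * Real.exp (σ * u - c))) (-(Real.log x' / σ))]
    congr 1
    funext u
    rw [harg x' hx']
    simp only [hFn, neg_add_cancel_right, ← sub_eq_add_neg]
    ring
  -- pointwise Gaussian density estimate
  have hφest : ∀ a' : ℝ, |a'| ≤ R → ∀ u : ℝ,
      φ (u - a') ≤ s * Real.exp (R ^ 2 / (2 * T)) * Real.exp (-u ^ 2 / (4 * T)) := by
    intro a' ha' u
    rw [hφ, mul_assoc]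
    apply mul_le_mul_of_nonneg_left _ hs0
    rw [← Real.exp_add]
    apply Real.exp_le_exp.mpr
    have h2T : (0 : ℝ) < 2 * T := by linarith
    have h4T : (0 : ℝ) < 4 * T := by linarith
    have h3 : -(u - a') ^ 2 ≤ R ^ 2 - u ^ 2 / 2 := by
      nlinarith [sq_nonneg (u - 2 * a'), mul_self_le_mul_self (abs_nonneg a') ha',
        sq_abs a']
    calc -(u - a') ^ 2 / (2 * T) ≤ (R ^ 2 - u ^ 2 / 2) / (2 * T) := by gcongr
      _ = R ^ 2 / (2 * T) + -u ^ 2 / (4 * T) := by ring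
  -- derivative of the translated density in the shift parameter
  have hdiff : ∀ u : ℝ, ∀ a' : ℝ,
      HasDerivAt (fun a : ℝ => Fn u * φ (u - a))
        (Fn u * (φ (u - a') * ((u - a') / T))) a' := by
    intro u a'
    have h0 : HasDerivAt (fun a : ℝ => u - a) (-1) a' :=
      (hasDerivAt_id a').const_sub u
    have h1 := h0.pow 2
    have h2 := (h1.neg).div_const (2 * T)
    have h3 := h2.exp
    have h4 := h3.const_mul s
    have h5 : HasDerivAt (fun a : ℝ => φ (u - a)) (φ (u - a') * ((u - a') / T)) a' := by
      simp only [hφ]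
      convert h4 using 1
      all_goals try rfl
      simp only [Pi.neg_apply, Pi.pow_apply]
      push_cast
      rw [pow_one]
      field_simp
    exact h5.const_mul (Fn u)
  -- integrability constants
  have hc4 : (0 : ℝ) < 1 / (4 * T) := by positivity
  have hexp4 : ∀ u : ℝ, Real.exp (-u ^ 2 / (4 * T)) = Real.exp (-(1 / (4 * T)) * u ^ 2) := by
    intro u; congr 1; ring
  -- integrability of the integrand at a₀
  have hInt : ∀ a' : ℝ, |a'| ≤ R → Integrable (fun u => Fn u * φ (u - a')) := by
    intro a' ha'
    refine Integrable.mono' (((QG.integrable_aux b hc4).const_mul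
      (K * (s * Real.exp (R ^ 2 / (2 * T))))) ) ?_ ?_
    · exact (hFnmeas.mul (hφmeas.comp (measurable_id.sub_const a'))).aestronglyMeasurable
    · filter_upwards with u
      rw [Real.norm_eq_abs, abs_mul, abs_of_nonneg (hφnonneg _)]
      calc |Fn u| * φ (u - a')
          ≤ (K * Real.exp (b * |u|)) * (s * Real.exp (R ^ 2 / (2 * T)) *
              Real.exp (-u ^ 2 / (4 * T))) := by
            apply mul_le_mul (hFnb u) (hφest a' ha' u) (hφnonneg _) (by positivity)
        _ = K * (s * Real.exp (R ^ 2 / (2 * T))) *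
              Real.exp (b * |u| - 1 / (4 * T) * u ^ 2) := by
            rw [show b * |u| - 1 / (4 * T) * u ^ 2
                = b * |u| + -u ^ 2 / (4 * T) from by ring, Real.exp_add]
            ring
  -- the bound for the derivative integrand on the ball
  set K₂ : ℝ := K * (s * Real.exp (R ^ 2 / (2 * T))) * Real.exp R / T with hK₂
  have hbound : ∀ u : ℝ, ∀ a' ∈ Metric.ball a₀ 1,
      ‖Fn u * (φ (u - a') * ((u - a') / T))‖
        ≤ K₂ * Real.exp ((b + 1) * |u| - 1 / (4 * T) * u ^ 2) := by
    intro u a' ha'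
    have haR : |a'| ≤ R := by
      have := Metric.mem_ball.mp ha'
      rw [Real.dist_eq] at this
      calc |a'| = |a₀ + (a' - a₀)| := by ring_nf
        _ ≤ |a₀| + |a' - a₀| := abs_add_le _ _
        _ ≤ |a₀| + 1 := by linarith
        _ = R := hR.symm
    have hua : |u - a'| ≤ Real.exp R * Real.exp |u| := by
      calc |u - a'| ≤ |u| + |a'| := abs_sub _ _
        _ ≤ |u| + R := by linarith
        _ ≤ Real.exp (|u| + R) := by
            have := Real.add_one_le_exp (|u| + R)
            linarith
        _ = Real.exp R * Real.exp |u| := by rw [← Real.exp_add]; ring_nf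
    rw [Real.norm_eq_abs, abs_mul, abs_mul, abs_of_nonneg (hφnonneg _), abs_div,
      abs_of_pos hT]
    calc |Fn u| * (φ (u - a') * (|u - a'| / T))
        ≤ (K * Real.exp (b * |u|)) * ((s * Real.exp (R ^ 2 / (2 * T)) *
            Real.exp (-u ^ 2 / (4 * T))) * ((Real.exp R * Real.exp |u|) / T)) := by
          apply mul_le_mul (hFnb u) _ (by positivity) (by positivity)
          apply mul_le_mul (hφest a' haR u) _ (by positivity) (by positivity)
          exact (div_le_div_iff_of_pos_right hT).mpr hua
      _ = K₂ * Real.exp ((b + 1) * |u| - 1 / (4 * T) * u ^ 2) := by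
          have hE : Real.exp ((b + 1) * |u| - 1 / (4 * T) * u ^ 2)
              = Real.exp (b * |u|) * Real.exp |u| * Real.exp (-u ^ 2 / (4 * T)) := by
            rw [← Real.exp_add, ← Real.exp_add]
            congr 1
            ring
          rw [hE, hK₂]
          ring
  -- differentiation under the integral sign
  have hmain := hasDerivAt_integral_of_dominated_loc_of_deriv_le (𝕜 := ℝ)
    (μ := (volume : Measure ℝ)) (x₀ := a₀)
    (F := fun a u => Fn u * φ (u - a))
    (F' := fun a u => Fn u * (φ (u - a) * ((u - a) / T)))
    (bound := fun u => K₂ * Real.exp ((b + 1) * |u| - 1 / (4 * T) * u ^ 2))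
    (Metric.ball_mem_nhds a₀ one_pos)
    (Filter.Eventually.of_forall fun a =>
      (hFnmeas.mul (hφmeas.comp (measurable_id.sub_const a))).aestronglyMeasurable)
    (hInt a₀ (by rw [hR]; linarith [abs_nonneg a₀]))
    ((hFnmeas.mul ((hφmeas.comp (measurable_id.sub_const a₀)).mul
      ((measurable_id.sub_const a₀).div_const T))).aestronglyMeasurable)
    (Filter.Eventually.of_forall fun u => fun a' ha' => hbound u a' ha')
    ((QG.integrable_aux (b + 1) hc4).const_mul K₂)
    (Filter.Eventually.of_forall fun u => fun a' _ => hdiff u a')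
  have hΦd : HasDerivAt (fun a => ∫ u, Fn u * φ (u - a))
      (∫ u, Fn u * (φ (u - a₀) * ((u - a₀) / T))) a₀ := hmain.2
  -- chain rule with x' ↦ log x' / σ
  have hlog : HasDerivAt (fun x' : ℝ => Real.log x' / σ) (x⁻¹ / σ) x :=
    (Real.hasDerivAt_log hx.ne').div_const σ
  have hcomp := HasDerivAt.comp x (ha₀ ▸ hΦd) hlog
  -- transfer along local equality of functions
  have hev : (fun x' : ℝ => ∫ u, g (x' * Real.exp (σ * u - c)) ∂(gaussianReal 0 v))
      =ᶠ[nhds x] ((fun a => ∫ u, Fn u * φ (u - a)) ∘ fun x' : ℝ => Real.log x' / σ) := by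
    filter_upwards [eventually_gt_nhds hx] with x' hx'
    exact hGeq x' hx'
  have hfinal := hcomp.congr_of_eventuallyEq hev
  -- identify the derivative value
  have hvalue : (∫ u, g (x * Real.exp (σ * u - c)) * (u / (x * σ * T))
        ∂(gaussianReal 0 v))
      = (∫ u, Fn u * (φ (u - a₀) * ((u - a₀) / T))) * (x⁻¹ / σ) := by
    rw [QG.integral_gaussianReal_eq v hv, hφeq]
    rw [← MeasureTheory.integral_add_right_eq_self
      (fun u => Fn u * (φ (u - a₀) * ((u - a₀) / T))) a₀, ← integral_mul_const]
    congr 1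
    funext u
    simp only [add_sub_cancel_right]
    rw [harg x hx]
    simp only [hFn, ha₀]
    have hσ0 : σ ≠ 0 := hσ.ne'
    have hx0 : x ≠ 0 := hx.ne'
    have hT0 : T ≠ 0 := hT.ne'
    field_simp
  rw [hvalue]
  exact hfinal

/-- **Cross-gamma in the independent lognormal futures model.** -/
theorem cross_gamma_independent
    (T σE σI : ℝ) (hT : 0 < T) (hσE : 0 < σE) (hσI : 0 < σI)
    (g h : ℝ → ℝ) (hg : Measurable g) (hh : Measurable h)
    (C : ℝ) (p : ℕ) (hC : 0 ≤ C)
    (hgb : ∀ z : ℝ, |g z| ≤ C * (1 + |z|) ^ p)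
    (hhb : ∀ z : ℝ, |h z| ≤ C * (1 + |z|) ^ p)
    (x y : ℝ) (hx : 0 < x) (hy : 0 < y) :
    (∀ y' : ℝ, 0 < y' →
      DifferentiableAt ℝ
        (fun x' : ℝ =>
          ∫ w : ℝ × ℝ,
            g (x' * Real.exp (σE * w.1 - σE ^ 2 * T / 2)) *
              h (y' * Real.exp (σI * w.2 - σI ^ 2 * T / 2))
            ∂((gaussianReal 0 T.toNNReal).prod (gaussianReal 0 T.toNNReal))) x) ∧
    HasDerivAt
      (fun y' : ℝ =>
        deriv
          (fun x' : ℝ =>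
            ∫ w : ℝ × ℝ,
              g (x' * Real.exp (σE * w.1 - σE ^ 2 * T / 2)) *
                h (y' * Real.exp (σI * w.2 - σI ^ 2 * T / 2))
              ∂((gaussianReal 0 T.toNNReal).prod (gaussianReal 0 T.toNNReal))) x)
      (∫ w : ℝ × ℝ,
          g (x * Real.exp (σE * w.1 - σE ^ 2 * T / 2)) *
            h (y * Real.exp (σI * w.2 - σI ^ 2 * T / 2)) *
            (w.1 * w.2 / (x * y * σE * σI * T ^ 2))
        ∂((gaussianReal 0 T.toNNReal).prod (gaussianReal 0 T.toNNReal)))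
      y := by
  set ν := gaussianReal 0 T.toNNReal with hν
  -- the two one-dimensional price functionals and their Malliavin derivatives
  set G : ℝ → ℝ := fun x' => ∫ u, g (x' * Real.exp (σE * u - σE ^ 2 * T / 2)) ∂ν with hG
  set H : ℝ → ℝ := fun y' => ∫ v, h (y' * Real.exp (σI * v - σI ^ 2 * T / 2)) ∂ν with hH
  set G' : ℝ := ∫ u, g (x * Real.exp (σE * u - σE ^ 2 * T / 2)) * (u / (x * σE * T)) ∂ν
    with hG'
  set H' : ℝ := ∫ v, h (y * Real.exp (σI * v - σI ^ 2 * T / 2)) * (v / (y * σI * T)) ∂ν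
    with hH'
  have hGd : HasDerivAt G G' x := QG.malliavin_delta T hT σE hσE g hg C p hC hgb x hx
  have hHd : HasDerivAt H H' y := QG.malliavin_delta T hT σI hσI h hh C p hC hhb y hy
  -- factorization of the double integral
  have hfact : ∀ x' y' : ℝ,
      (∫ w : ℝ × ℝ,
        g (x' * Real.exp (σE * w.1 - σE ^ 2 * T / 2)) *
          h (y' * Real.exp (σI * w.2 - σI ^ 2 * T / 2)) ∂(ν.prod ν)) = G x' * H y' := by
    intro x' y'
    exact integral_prod_mul (L := ℝ)
      (fun u => g (x' * Real.exp (σE * u - σE ^ 2 * T / 2)))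
      (fun v => h (y' * Real.exp (σI * v - σI ^ 2 * T / 2)))
  have hfun : ∀ y' : ℝ,
      (fun x' : ℝ =>
        ∫ w : ℝ × ℝ,
          g (x' * Real.exp (σE * w.1 - σE ^ 2 * T / 2)) *
            h (y' * Real.exp (σI * w.2 - σI ^ 2 * T / 2)) ∂(ν.prod ν))
        = fun x' => G x' * H y' := fun y' => funext fun x' => hfact x' y'
  constructor
  · intro y' _
    rw [hfun y']
    exact hGd.differentiableAt.mul_const (H y')
  · have hderiv : (fun y' : ℝ =>
        deriv
          (fun x' : ℝ =>
            ∫ w : ℝ × ℝ,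
              g (x' * Real.exp (σE * w.1 - σE ^ 2 * T / 2)) *
                h (y' * Real.exp (σI * w.2 - σI ^ 2 * T / 2)) ∂(ν.prod ν)) x)
        = fun y' => G' * H y' := by
      funext y'
      rw [hfun y']
      exact (hGd.mul_const (H y')).deriv
    rw [hderiv]
    have htarget :
        (∫ w : ℝ × ℝ,
          g (x * Real.exp (σE * w.1 - σE ^ 2 * T / 2)) *
            h (y * Real.exp (σI * w.2 - σI ^ 2 * T / 2)) *
            (w.1 * w.2 / (x * y * σE * σI * T ^ 2)) ∂(ν.prod ν)) = G' * H' := by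
      have heq : ∀ w : ℝ × ℝ,
          g (x * Real.exp (σE * w.1 - σE ^ 2 * T / 2)) *
            h (y * Real.exp (σI * w.2 - σI ^ 2 * T / 2)) *
            (w.1 * w.2 / (x * y * σE * σI * T ^ 2))
          = (g (x * Real.exp (σE * w.1 - σE ^ 2 * T / 2)) * (w.1 / (x * σE * T))) *
            (h (y * Real.exp (σI * w.2 - σI ^ 2 * T / 2)) * (w.2 / (y * σI * T))) := by
        intro w
        field_simp
      rw [show (fun w : ℝ × ℝ =>
          g (x * Real.exp (σE * w.1 - σE ^ 2 * T / 2)) *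
            h (y * Real.exp (σI * w.2 - σI ^ 2 * T / 2)) *
            (w.1 * w.2 / (x * y * σE * σI * T ^ 2)))
          = fun w : ℝ × ℝ =>
            (g (x * Real.exp (σE * w.1 - σE ^ 2 * T / 2)) * (w.1 / (x * σE * T))) *
            (h (y * Real.exp (σI * w.2 - σI ^ 2 * T / 2)) * (w.2 / (y * σI * T)))
        from funext heq]
      exact integral_prod_mul (L := ℝ)
        (fun u => g (x * Real.exp (σE * u - σE ^ 2 * T / 2)) * (u / (x * σE * T)))
        (fun v => h (y * Real.exp (σI * v - σI ^ 2 * T / 2)) * (v / (y * σI * T)))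
    rw [htarget]
    exact hHd.const_mul G'
end

section
/- In the correlated lognormal futures model, for every initial temperature price y > 0 the map y ↦ ∫∫ g(F^E(x,u))·h(F^I(y,u,v)) dμ(u,v) is differentiable at y, and its derivative (the temperature delta in the correlated case) equals Δ_I = ∫∫ g(F^E(x,u))·h(F^I(y,u,v)) · v/(y·σ_I·√(1−ρ²)·T) dμ(u,v), i.e. the Malliavin weight is π^{Δ_I}(v) = v/(y σ_I √(1−ρ²) T). -/
open scoped ENNReal NNReal
set_option maxHeartbeats 1000000


open MeasureTheory ProbabilityTheory Real


lemma tdc_one_add_exp_add_le (s t : ℝ) :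
    1 + Real.exp (s + t) ≤ (1 + Real.exp s) * (1 + Real.exp t) := by
  have hs := (Real.exp_pos s).le
  have ht := (Real.exp_pos t).le
  have hst : Real.exp (s + t) = Real.exp s * Real.exp t := Real.exp_add s t
  nlinarith

lemma tdc_exp_quad_le (b : ℝ) {T : ℝ} (hT : 0 < T) (v : ℝ) :
    Real.exp (b * |v| - v ^ 2 / (2 * T)) ≤ Real.exp (b ^ 2 * T) * Real.exp (-(4 * T)⁻¹ * v ^ 2) := by
  rw [← Real.exp_add]
  apply Real.exp_le_exp.mpr
  have h4 : (0:ℝ) < 4 * T := by linarith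
  have h2 : |v| ^ 2 = v ^ 2 := sq_abs v
  have goal4 : (b * |v| - v ^ 2 / (2 * T)) * (4 * T)
      ≤ (b ^ 2 * T + -(4 * T)⁻¹ * v ^ 2) * (4 * T) := by
    have e1 : v ^ 2 / (2 * T) * (4 * T) = 2 * v ^ 2 := by field_simp; ring
    have e2 : (4 * T)⁻¹ * v ^ 2 * (4 * T) = v ^ 2 := by field_simp
    nlinarith [sq_nonneg (|v| - 2 * b * T)]
  exact le_of_mul_le_mul_right goal4 h4

lemma tdc_integrable_exp_abs_quad (b : ℝ) {T : ℝ} (hT : 0 < T) :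
    Integrable (fun v : ℝ => Real.exp (b * |v| - v ^ 2 / (2 * T))) := by
  have h4 : (0:ℝ) < (4 * T)⁻¹ := by positivity
  refine Integrable.mono' ((integrable_exp_neg_mul_sq h4).const_mul (Real.exp (b ^ 2 * T)))
    ?_ (ae_of_all _ fun v => ?_)
  · exact (Real.continuous_exp.comp (by continuity)).aestronglyMeasurable
  · rw [Real.norm_eq_abs, abs_of_nonneg (Real.exp_nonneg _)]
    exact tdc_exp_quad_le b hT v

lemma tdc_toNNReal_ne {T : ℝ} (hT : 0 < T) : T.toNNReal ≠ 0 := by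
  simp [Real.toNNReal_eq_zero, not_le, hT]

lemma tdc_pdf_eq {T : ℝ} (hT : 0 < T) (v : ℝ) :
    gaussianPDFReal 0 T.toNNReal v
      = (Real.sqrt (2 * Real.pi * T))⁻¹ * Real.exp (-v ^ 2 / (2 * T)) := by
  simp [gaussianPDFReal, Real.coe_toNNReal T hT.le]

lemma tdc_integrable_gauss {T : ℝ} (hT : 0 < T) {K : ℝ → ℝ} (hK : Measurable K)
    (c β : ℝ) (hbd : ∀ u, |K u| ≤ c * Real.exp (β * |u|)) :
    Integrable K (gaussianReal 0 T.toNNReal) := by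
  have hVne := tdc_toNNReal_ne hT
  rw [gaussianReal_of_var_ne_zero _ hVne,
    show gaussianPDF 0 T.toNNReal
        = fun x => ENNReal.ofReal (gaussianPDFReal 0 T.toNNReal x) from rfl,
    integrable_withDensity_iff ((measurable_gaussianPDFReal 0 T.toNNReal).ennreal_ofReal)
      (ae_of_all _ fun u => ENNReal.ofReal_lt_top)]
  have heq : (fun x => K x * (ENNReal.ofReal (gaussianPDFReal 0 T.toNNReal x)).toReal)
      = fun u => K u * gaussianPDFReal 0 T.toNNReal u := by
    funext u
    rw [ENNReal.toReal_ofReal (gaussianPDFReal_nonneg _ _ _)]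
  rw [heq]
  refine Integrable.mono'
    ((tdc_integrable_exp_abs_quad β hT).const_mul (c * (Real.sqrt (2 * Real.pi * T))⁻¹))
    ((hK.mul (measurable_gaussianPDFReal 0 T.toNNReal)).aestronglyMeasurable)
    (ae_of_all _ fun u => ?_)
  rw [Real.norm_eq_abs, abs_mul, abs_of_nonneg (gaussianPDFReal_nonneg _ _ _), tdc_pdf_eq hT]
  calc |K u| * ((Real.sqrt (2 * Real.pi * T))⁻¹ * Real.exp (-u ^ 2 / (2 * T)))
      ≤ (c * Real.exp (β * |u|)) * ((Real.sqrt (2 * Real.pi * T))⁻¹ * Real.exp (-u ^ 2 / (2 * T))) :=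
        mul_le_mul_of_nonneg_right (hbd u) (by positivity)
    _ = c * (Real.sqrt (2 * Real.pi * T))⁻¹ * Real.exp (β * |u| - u ^ 2 / (2 * T)) := by
        rw [show β * |u| - u ^ 2 / (2 * T) = β * |u| + -u ^ 2 / (2 * T) from by ring,
          Real.exp_add]
        ring

lemma tdc_prod_eq_withDensity {T : ℝ} (hT : 0 < T) :
    (gaussianReal 0 T.toNNReal).prod (gaussianReal 0 T.toNNReal)
      = ((gaussianReal 0 T.toNNReal).prod volume).withDensity
          (fun w => gaussianPDF 0 T.toNNReal w.2) := by
  have hVne := tdc_toNNReal_ne hT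
  have hm : Measurable (gaussianPDF 0 T.toNNReal) :=
    (measurable_gaussianPDFReal 0 T.toNNReal).ennreal_ofReal
  refine Measure.prod_eq fun s t hs ht => ?_
  rw [withDensity_apply _ (hs.prod ht), ← Measure.prod_restrict]
  have haem : AEMeasurable (fun z : ℝ × ℝ => gaussianPDF 0 T.toNNReal z.2)
      (((gaussianReal 0 T.toNNReal).restrict s).prod (volume.restrict t)) :=
    (hm.comp measurable_snd).aemeasurable
  rw [MeasureTheory.lintegral_prod _ haem]
  simp only [lintegral_const, Measure.restrict_apply_univ]
  rw [gaussianReal_apply _ hVne t, mul_comm]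

lemma tdc_integral_prod_gauss {T : ℝ} (hT : 0 < T) (G : ℝ × ℝ → ℝ) :
    ∫ w, G w ∂((gaussianReal 0 T.toNNReal).prod (gaussianReal 0 T.toNNReal))
      = ∫ w, gaussianPDFReal 0 T.toNNReal w.2 * G w
          ∂((gaussianReal 0 T.toNNReal).prod volume) := by
  rw [tdc_prod_eq_withDensity hT]
  have hmeas : Measurable fun w : ℝ × ℝ => (gaussianPDFReal 0 T.toNNReal w.2).toNNReal :=
    ((measurable_gaussianPDFReal 0 T.toNNReal).comp measurable_snd).real_toNNReal
  have hd : (fun w : ℝ × ℝ => gaussianPDF 0 T.toNNReal w.2)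
      = fun w : ℝ × ℝ => ((gaussianPDFReal 0 T.toNNReal w.2).toNNReal : ℝ≥0∞) := rfl
  rw [hd, integral_withDensity_eq_integral_smul hmeas]
  congr 1
  funext w
  rw [NNReal.smul_def, Real.coe_toNNReal _ (gaussianPDFReal_nonneg _ _ _), smul_eq_mul]

lemma tdc_integral_shift_snd {T : ℝ} (s : ℝ) (H : ℝ × ℝ → ℝ) :
    ∫ w : ℝ × ℝ, H (w.1, w.2 + s) ∂((gaussianReal 0 T.toNNReal).prod volume)
      = ∫ w, H w ∂((gaussianReal 0 T.toNNReal).prod volume) := by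
  have hmp : MeasurePreserving (fun w : ℝ × ℝ => (w.1, w.2 + s))
      ((gaussianReal 0 T.toNNReal).prod volume) ((gaussianReal 0 T.toNNReal).prod volume) :=
    (MeasurePreserving.id _).prod (measurePreserving_add_right volume s)
  have hem : MeasurableEmbedding (fun w : ℝ × ℝ => (w.1, w.2 + s)) :=
    ((MeasurableEquiv.refl ℝ).prodCongr (MeasurableEquiv.addRight s)).measurableEmbedding
  exact hmp.integral_comp hem H


lemma tdc_E1 {T M : ℝ} (hT : 0 < T) {s' v : ℝ} (hs' : |s'| ≤ M) :
    -(v - s') ^ 2 / (2 * T) ≤ M / T * |v| - v ^ 2 / (2 * T) := by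
  have h2T : (0:ℝ) < 2 * T := by linarith
  have hkey : M / T * |v| - v ^ 2 / (2 * T) = (2 * (M * |v|) - v ^ 2) / (2 * T) := by
    field_simp
  rw [hkey, div_le_div_iff₀ h2T h2T]
  have h1 : v * s' ≤ |v| * M := by
    calc v * s' ≤ |v * s'| := le_abs_self _
      _ = |v| * |s'| := abs_mul v s'
      _ ≤ |v| * M := mul_le_mul_of_nonneg_left hs' (abs_nonneg v)
  nlinarith [sq_nonneg s', sq_abs v]

lemma tdc_weight_bound {T a c₀ M cB β : ℝ} (hT : 0 < T) (ha : 0 < a) (hc₀ : 0 ≤ c₀)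
    (hM : 0 ≤ M) (hcB : 0 ≤ cB) {y2 : ℝ} (hy2 : 0 < y2) {y' s' v : ℝ}
    (hy' : y2 ≤ y') (hs' : |s'| ≤ M) :
    cB * Real.exp (β * |v|) *
        ((c₀ * Real.exp (-(v - s') ^ 2 / (2 * T))) * (|v - s'| * (T * a * y')⁻¹))
      ≤ (cB * c₀ * (1 + M) * (T * a * y2)⁻¹) *
          Real.exp ((β + M / T + 1) * |v| - v ^ 2 / (2 * T)) := by
  have hy'0 : 0 < y' := lt_of_lt_of_le hy2 hy'
  have hE2 : |v - s'| ≤ (1 + M) * Real.exp |v| := by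
    have h1 : |v - s'| ≤ |v| + M := (abs_sub v s').trans (by linarith)
    have h2 : |v| ≤ Real.exp |v| := (Real.add_one_le_exp |v|).trans' (by linarith)
    have h3 : M ≤ M * Real.exp |v| :=
      le_mul_of_one_le_right hM (Real.one_le_exp (abs_nonneg v))
    nlinarith
  have hE3 : (T * a * y')⁻¹ ≤ (T * a * y2)⁻¹ := by
    apply inv_anti₀ (by positivity)
    exact mul_le_mul_of_nonneg_left hy' (by positivity)
  calc cB * Real.exp (β * |v|) *
        ((c₀ * Real.exp (-(v - s') ^ 2 / (2 * T))) * (|v - s'| * (T * a * y')⁻¹))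
      ≤ cB * Real.exp (β * |v|) *
        ((c₀ * Real.exp (M / T * |v| - v ^ 2 / (2 * T))) *
          (((1 + M) * Real.exp |v|) * (T * a * y2)⁻¹)) := by
        have hx1 : c₀ * Real.exp (-(v - s') ^ 2 / (2 * T))
            ≤ c₀ * Real.exp (M / T * |v| - v ^ 2 / (2 * T)) :=
          mul_le_mul_of_nonneg_left (Real.exp_le_exp.mpr (tdc_E1 hT hs')) hc₀
        have hx2 : |v - s'| * (T * a * y')⁻¹
            ≤ ((1 + M) * Real.exp |v|) * (T * a * y2)⁻¹ :=
          mul_le_mul hE2 hE3 (by positivity) (by positivity)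
        have := mul_le_mul hx1 hx2 (by positivity) (by positivity)
        exact mul_le_mul_of_nonneg_left this (by positivity)
    _ = (cB * c₀ * (1 + M) * (T * a * y2)⁻¹) *
          Real.exp ((β + M / T + 1) * |v| - v ^ 2 / (2 * T)) := by
        rw [show (β + M / T + 1) * |v| - v ^ 2 / (2 * T)
            = β * |v| + ((M / T * |v| - v ^ 2 / (2 * T)) + |v|) from by ring,
          Real.exp_add, Real.exp_add]
        ring

lemma tdc_core {T a : ℝ} (hT : 0 < T) (ha : 0 < a)
    (P : ℝ × ℝ → ℝ) (hP : Measurable P)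
    (KA βA cB β : ℝ) (hKA : 0 ≤ KA) (hcB : 0 ≤ cB)
    (hPb : ∀ w : ℝ × ℝ, |P w| ≤ (KA * Real.exp (βA * |w.1|)) * (cB * Real.exp (β * |w.2|)))
    {y : ℝ} (hy : 0 < y) :
    HasDerivAt
      (fun y' : ℝ => ∫ w : ℝ × ℝ,
          P w * ((Real.sqrt (2 * Real.pi * T))⁻¹ *
            Real.exp (-(w.2 - Real.log y' / a) ^ 2 / (2 * T)))
        ∂((gaussianReal 0 T.toNNReal).prod volume))
      (∫ w : ℝ × ℝ,
          P w * (((Real.sqrt (2 * Real.pi * T))⁻¹ *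
            Real.exp (-(w.2 - Real.log y / a) ^ 2 / (2 * T))) *
              ((w.2 - Real.log y / a) * (T * a * y)⁻¹))
        ∂((gaussianReal 0 T.toNNReal).prod volume)) y := by
  have hTne : T ≠ 0 := ne_of_gt hT
  have hane : a ≠ 0 := ne_of_gt ha
  have hyne : y ≠ 0 := ne_of_gt hy
  set c₀ : ℝ := (Real.sqrt (2 * Real.pi * T))⁻¹ with hc₀def
  have hc₀ : 0 ≤ c₀ := by positivity
  set M : ℝ := (|Real.log (y / 2)| + |Real.log (2 * y)|) / a with hMdef
  have hM : 0 ≤ M := by positivity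
  have hsM : ∀ y' : ℝ, y / 2 ≤ y' → y' ≤ 2 * y → |Real.log y' / a| ≤ M := by
    intro y' h1 h2
    have hy'0 : 0 < y' := lt_of_lt_of_le (by linarith) h1
    have hl1 : Real.log (y / 2) ≤ Real.log y' := Real.log_le_log (by positivity) h1
    have hl2 : Real.log y' ≤ Real.log (2 * y) := Real.log_le_log hy'0 h2
    have habs : |Real.log y'| ≤ |Real.log (y / 2)| + |Real.log (2 * y)| := by
      rw [abs_le]
      constructor
      · nlinarith [neg_abs_le (Real.log (y / 2)), abs_nonneg (Real.log (2 * y))]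
      · nlinarith [le_abs_self (Real.log (2 * y)), abs_nonneg (Real.log (y / 2))]
    rw [abs_div, abs_of_pos ha, hMdef]
    gcongr
  have hA : Integrable (fun u : ℝ => KA * Real.exp (βA * |u|)) (gaussianReal 0 T.toNNReal) := by
    refine tdc_integrable_gauss hT ?_ KA βA fun u => ?_
    · exact Continuous.measurable (by fun_prop)
    · rw [abs_of_nonneg (by positivity)]
  have hD : Integrable (fun v : ℝ => (cB * c₀ * (1 + M) * (T * a * (y / 2))⁻¹) *
      Real.exp ((β + M / T + 1) * |v| - v ^ 2 / (2 * T))) volume :=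
    (tdc_integrable_exp_abs_quad _ hT).const_mul _
  have hD0 : Integrable (fun v : ℝ => (cB * c₀) *
      Real.exp ((β + M / T) * |v| - v ^ 2 / (2 * T))) volume :=
    (tdc_integrable_exp_abs_quad _ hT).const_mul _
  have hφm : ∀ sv : ℝ, Measurable fun w : ℝ × ℝ =>
      c₀ * Real.exp (-(w.2 - sv) ^ 2 / (2 * T)) := fun sv =>
    Continuous.measurable (by fun_prop)
  have hFm : ∀ y' : ℝ, AEStronglyMeasurable
      (fun w : ℝ × ℝ => P w * (c₀ * Real.exp (-(w.2 - Real.log y' / a) ^ 2 / (2 * T))))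
      ((gaussianReal 0 T.toNNReal).prod volume) := fun y' =>
    (hP.mul (hφm _)).aestronglyMeasurable
  have hF'm : AEStronglyMeasurable
      (fun w : ℝ × ℝ => P w * ((c₀ * Real.exp (-(w.2 - Real.log y / a) ^ 2 / (2 * T))) *
        ((w.2 - Real.log y / a) * (T * a * y)⁻¹)))
      ((gaussianReal 0 T.toNNReal).prod volume) :=
    (hP.mul ((hφm _).mul (Continuous.measurable (by fun_prop)))).aestronglyMeasurable
  have hsy : |Real.log y / a| ≤ M := hsM y (by linarith) (by linarith)
  have hFint : Integrable
      (fun w : ℝ × ℝ => P w * (c₀ * Real.exp (-(w.2 - Real.log y / a) ^ 2 / (2 * T))))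
      ((gaussianReal 0 T.toNNReal).prod volume) := by
    refine Integrable.mono' (hA.mul_prod hD0) (hFm y) (ae_of_all _ fun w => ?_)
    rw [Real.norm_eq_abs, abs_mul,
      abs_of_nonneg (show (0:ℝ) ≤ c₀ * Real.exp (-(w.2 - Real.log y / a) ^ 2 / (2 * T)) by
        positivity)]
    calc |P w| * (c₀ * Real.exp (-(w.2 - Real.log y / a) ^ 2 / (2 * T)))
        ≤ ((KA * Real.exp (βA * |w.1|)) * (cB * Real.exp (β * |w.2|))) *
            (c₀ * Real.exp (M / T * |w.2| - w.2 ^ 2 / (2 * T))) :=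
          mul_le_mul (hPb w)
            (mul_le_mul_of_nonneg_left (Real.exp_le_exp.mpr (tdc_E1 hT hsy)) hc₀)
            (by positivity) (by positivity)
      _ = (KA * Real.exp (βA * |w.1|)) *
            ((cB * c₀) * Real.exp ((β + M / T) * |w.2| - w.2 ^ 2 / (2 * T))) := by
          rw [show (β + M / T) * |w.2| - w.2 ^ 2 / (2 * T)
              = β * |w.2| + (M / T * |w.2| - w.2 ^ 2 / (2 * T)) from by ring, Real.exp_add]
          ring
  have hbd : ∀ᵐ w ∂((gaussianReal 0 T.toNNReal).prod volume),
      ∀ y' ∈ Metric.ball y (y / 2),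
        ‖P w * ((c₀ * Real.exp (-(w.2 - Real.log y' / a) ^ 2 / (2 * T))) *
            ((w.2 - Real.log y' / a) * (T * a * y')⁻¹))‖
          ≤ (KA * Real.exp (βA * |w.1|)) * ((cB * c₀ * (1 + M) * (T * a * (y / 2))⁻¹) *
              Real.exp ((β + M / T + 1) * |w.2| - w.2 ^ 2 / (2 * T))) := by
    refine ae_of_all _ fun w y' hmem => ?_
    rw [Metric.mem_ball, Real.dist_eq] at hmem
    obtain ⟨hm1, hm2⟩ := abs_lt.mp hmem
    have h1 : y / 2 ≤ y' := by linarith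
    have h2 : y' ≤ 2 * y := by linarith
    have hy'0 : 0 < y' := by linarith
    have hs' : |Real.log y' / a| ≤ M := hsM y' h1 h2
    calc ‖P w * ((c₀ * Real.exp (-(w.2 - Real.log y' / a) ^ 2 / (2 * T))) *
            ((w.2 - Real.log y' / a) * (T * a * y')⁻¹))‖
        = |P w| * ((c₀ * Real.exp (-(w.2 - Real.log y' / a) ^ 2 / (2 * T))) *
            (|w.2 - Real.log y' / a| * (T * a * y')⁻¹)) := by
          rw [Real.norm_eq_abs, abs_mul, abs_mul, abs_of_nonneg (show (0:ℝ) ≤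
              c₀ * Real.exp (-(w.2 - Real.log y' / a) ^ 2 / (2 * T)) by positivity),
            abs_mul, abs_of_nonneg (show (0:ℝ) ≤ (T * a * y')⁻¹ by positivity)]
      _ ≤ ((KA * Real.exp (βA * |w.1|)) * (cB * Real.exp (β * |w.2|))) *
            ((c₀ * Real.exp (-(w.2 - Real.log y' / a) ^ 2 / (2 * T))) *
              (|w.2 - Real.log y' / a| * (T * a * y')⁻¹)) :=
          mul_le_mul_of_nonneg_right (hPb w) (by positivity)
      _ = (KA * Real.exp (βA * |w.1|)) * (cB * Real.exp (β * |w.2|) *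
            ((c₀ * Real.exp (-(w.2 - Real.log y' / a) ^ 2 / (2 * T))) *
              (|w.2 - Real.log y' / a| * (T * a * y')⁻¹))) := by ring
      _ ≤ (KA * Real.exp (βA * |w.1|)) * ((cB * c₀ * (1 + M) * (T * a * (y / 2))⁻¹) *
            Real.exp ((β + M / T + 1) * |w.2| - w.2 ^ 2 / (2 * T))) :=
          mul_le_mul_of_nonneg_left
            (tdc_weight_bound hT ha hc₀ hM hcB (half_pos hy) h1 hs') (by positivity)
  have hdiff : ∀ᵐ w ∂((gaussianReal 0 T.toNNReal).prod volume),
      ∀ y' ∈ Metric.ball y (y / 2),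
        HasDerivAt (fun t : ℝ =>
            P w * (c₀ * Real.exp (-(w.2 - Real.log t / a) ^ 2 / (2 * T))))
          (P w * ((c₀ * Real.exp (-(w.2 - Real.log y' / a) ^ 2 / (2 * T))) *
            ((w.2 - Real.log y' / a) * (T * a * y')⁻¹))) y' := by
    refine ae_of_all _ fun w y' hmem => ?_
    rw [Metric.mem_ball, Real.dist_eq] at hmem
    obtain ⟨hm1, hm2⟩ := abs_lt.mp hmem
    have hy'0 : 0 < y' := by linarith
    have hy'ne : y' ≠ 0 := ne_of_gt hy'0
    have hpow : HasDerivAt (fun z : ℝ => z ^ 2) (2 * (w.2 - Real.log y' / a))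
        (w.2 - Real.log y' / a) := by
      simpa using hasDerivAt_pow 2 (w.2 - Real.log y' / a)
    have hq : HasDerivAt (fun z : ℝ => -z ^ 2 / (2 * T))
        (-(2 * (w.2 - Real.log y' / a)) / (2 * T)) (w.2 - Real.log y' / a) :=
      (hpow.neg).div_const (2 * T)
    have hexp : HasDerivAt (fun z : ℝ => Real.exp (-z ^ 2 / (2 * T)))
        (Real.exp (-(w.2 - Real.log y' / a) ^ 2 / (2 * T)) *
          (-(2 * (w.2 - Real.log y' / a)) / (2 * T))) (w.2 - Real.log y' / a) := hq.exp
    have hsub : HasDerivAt (fun t : ℝ => w.2 - Real.log t / a) (-(y'⁻¹ / a)) y' :=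
      ((Real.hasDerivAt_log hy'ne).div_const a).const_sub w.2
    have hcomp := hexp.comp y' hsub
    have hfin := (hcomp.const_mul c₀).const_mul (P w)
    convert hfin using 1
    · rfl
    · rfl
    · rfl
    · ring
  have main := hasDerivAt_integral_of_dominated_loc_of_deriv_le
    (μ := (gaussianReal 0 T.toNNReal).prod volume)
    (F := fun y' (w : ℝ × ℝ) =>
      P w * (c₀ * Real.exp (-(w.2 - Real.log y' / a) ^ 2 / (2 * T))))
    (F' := fun y' (w : ℝ × ℝ) =>
      P w * ((c₀ * Real.exp (-(w.2 - Real.log y' / a) ^ 2 / (2 * T))) *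
        ((w.2 - Real.log y' / a) * (T * a * y')⁻¹)))
    (bound := fun z : ℝ × ℝ => (KA * Real.exp (βA * |z.1|)) *
      ((cB * c₀ * (1 + M) * (T * a * (y / 2))⁻¹) *
        Real.exp ((β + M / T + 1) * |z.2| - z.2 ^ 2 / (2 * T))))
    (Metric.ball_mem_nhds y (half_pos hy)) (Filter.Eventually.of_forall hFm) hFint hF'm hbd (hA.mul_prod hD) hdiff
  exact main.2

noncomputable def tdcP (g h : ℝ → ℝ) (x σE σI ρ T : ℝ) (w : ℝ × ℝ) : ℝ :=
  g (x * Real.exp (σE * w.1 - σE ^ 2 * T / 2)) *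
    h (Real.exp (σI * Real.sqrt (1 - ρ ^ 2) * w.2 + (σI * ρ * w.1 - σI ^ 2 * T / 2)))



/-- **Temperature delta in the correlated lognormal futures model.**
With `Fᴱ(x,u) = x·exp(σ_E u − σ_E² T/2)` and
`Fᴵ(y,u,v) = y·exp(σ_I (ρu + √(1−ρ²) v) − σ_I² T/2)` driven by two independent Brownian
motions, for every `y > 0` the quanto price is differentiable in `y` with derivative given
by the Malliavin weight `v / (y σ_I √(1−ρ²) T)`. -/
theorem temperature_delta_correlated
    (T σE σI ρ : ℝ) (hT : 0 < T) (hσE : 0 < σE) (hσI : 0 < σI)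
    (hρ : ρ ∈ Set.Ioo (-1 : ℝ) 1)
    (g h : ℝ → ℝ) (hg : Measurable g) (hh : Measurable h)
    (C : ℝ) (p : ℕ) (hC : 0 ≤ C)
    (hgb : ∀ z : ℝ, |g z| ≤ C * (1 + |z|) ^ p)
    (hhb : ∀ z : ℝ, |h z| ≤ C * (1 + |z|) ^ p)
    (x y : ℝ) (hx : 0 < x) (hy : 0 < y) :
    HasDerivAt
      (fun y' : ℝ =>
        ∫ w : ℝ × ℝ,
          g (x * Real.exp (σE * w.1 - σE ^ 2 * T / 2)) *
            h (y' * Real.exp (σI * (ρ * w.1 + Real.sqrt (1 - ρ ^ 2) * w.2) - σI ^ 2 * T / 2))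
          ∂((gaussianReal 0 T.toNNReal).prod (gaussianReal 0 T.toNNReal)))
      (∫ w : ℝ × ℝ,
          g (x * Real.exp (σE * w.1 - σE ^ 2 * T / 2)) *
            h (y * Real.exp (σI * (ρ * w.1 + Real.sqrt (1 - ρ ^ 2) * w.2) - σI ^ 2 * T / 2)) *
            (w.2 / (y * σI * Real.sqrt (1 - ρ ^ 2) * T))
        ∂((gaussianReal 0 T.toNNReal).prod (gaussianReal 0 T.toNNReal)))
      y := by
  obtain ⟨hρ1, hρ2⟩ := hρ
  have hρsq : 0 < 1 - ρ ^ 2 := by nlinarith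
  have hsqrt : 0 < Real.sqrt (1 - ρ ^ 2) := Real.sqrt_pos.mpr hρsq
  have ha : 0 < σI * Real.sqrt (1 - ρ ^ 2) := mul_pos hσI hsqrt
  have hane : σI * Real.sqrt (1 - ρ ^ 2) ≠ 0 := ne_of_gt ha
  have hPmeas : Measurable (tdcP g h x σE σI ρ T) := by
    unfold tdcP
    exact (hg.comp (Continuous.measurable (by fun_prop))).mul
      (hh.comp (Continuous.measurable (by fun_prop)))
  -- the growth bound
  have hPb : ∀ w : ℝ × ℝ, |tdcP g h x σE σI ρ T w|
      ≤ (((C * (1 + x) ^ p) * (C * 2 ^ p * Real.exp ((p : ℝ) * (σI ^ 2 * T / 2)))) *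
          Real.exp (((p : ℝ) * σE + (p : ℝ) * σI) * |w.1|)) *
        ((2 ^ p) * Real.exp (((p : ℝ) * (σI * Real.sqrt (1 - ρ ^ 2))) * |w.2|)) := by
    intro w
    have hEarg : σE * w.1 - σE ^ 2 * T / 2 ≤ σE * |w.1| := by
      have h1 : σE * w.1 ≤ σE * |w.1| := mul_le_mul_of_nonneg_left (le_abs_self w.1) hσE.le
      nlinarith
    have hEpos : 0 < x * Real.exp (σE * w.1 - σE ^ 2 * T / 2) := by positivity
    have hg1 : |g (x * Real.exp (σE * w.1 - σE ^ 2 * T / 2))|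
        ≤ C * ((1 + x) * Real.exp (σE * |w.1|)) ^ p := by
      refine (hgb _).trans ?_
      gcongr
      rw [abs_of_pos hEpos]
      have h1 : (1:ℝ) ≤ Real.exp (σE * |w.1|) := Real.one_le_exp (by positivity)
      have h2 : x * Real.exp (σE * w.1 - σE ^ 2 * T / 2) ≤ x * Real.exp (σE * |w.1|) :=
        mul_le_mul_of_nonneg_left (Real.exp_le_exp.mpr hEarg) hx.le
      nlinarith [Real.exp_pos (σE * |w.1|)]
    have hcu : Real.exp (σI * ρ * w.1 - σI ^ 2 * T / 2)
        ≤ Real.exp (σI * |w.1| + σI ^ 2 * T / 2) := by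
      apply Real.exp_le_exp.mpr
      have h1 : σI * ρ * w.1 ≤ |σI * ρ * w.1| := le_abs_self _
      have h2 : |σI * ρ * w.1| = σI * (|ρ| * |w.1|) := by
        rw [abs_mul, abs_mul, abs_of_pos hσI]; ring
      have h3 : |ρ| ≤ 1 := by rw [abs_le]; constructor <;> linarith
      have h4 : σI * (|ρ| * |w.1|) ≤ σI * |w.1| := by
        apply mul_le_mul_of_nonneg_left ?_ hσI.le
        nlinarith [abs_nonneg w.1, abs_nonneg ρ]
      nlinarith [sq_nonneg σI]
    have hav : Real.exp (σI * Real.sqrt (1 - ρ ^ 2) * w.2)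
        ≤ Real.exp (σI * Real.sqrt (1 - ρ ^ 2) * |w.2|) :=
      Real.exp_le_exp.mpr (mul_le_mul_of_nonneg_left (le_abs_self w.2) ha.le)
    have hh1 : |h (Real.exp (σI * Real.sqrt (1 - ρ ^ 2) * w.2 + (σI * ρ * w.1 - σI ^ 2 * T / 2)))|
        ≤ C * ((2 * Real.exp (σI * Real.sqrt (1 - ρ ^ 2) * |w.2|)) *
            (2 * Real.exp (σI * |w.1| + σI ^ 2 * T / 2))) ^ p := by
      refine (hhb _).trans ?_
      gcongr
      rw [abs_of_pos (Real.exp_pos _)]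
      calc 1 + Real.exp (σI * Real.sqrt (1 - ρ ^ 2) * w.2 + (σI * ρ * w.1 - σI ^ 2 * T / 2))
          ≤ (1 + Real.exp (σI * Real.sqrt (1 - ρ ^ 2) * w.2)) *
              (1 + Real.exp (σI * ρ * w.1 - σI ^ 2 * T / 2)) := tdc_one_add_exp_add_le _ _
        _ ≤ (2 * Real.exp (σI * Real.sqrt (1 - ρ ^ 2) * |w.2|)) *
              (2 * Real.exp (σI * |w.1| + σI ^ 2 * T / 2)) := by
            have e1 : (1:ℝ) ≤ Real.exp (σI * Real.sqrt (1 - ρ ^ 2) * |w.2|) :=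
              Real.one_le_exp (by positivity)
            have e2 : (1:ℝ) ≤ Real.exp (σI * |w.1| + σI ^ 2 * T / 2) :=
              Real.one_le_exp (by positivity)
            have e3 := (Real.exp_pos (σI * Real.sqrt (1 - ρ ^ 2) * w.2)).le
            have e4 := (Real.exp_pos (σI * ρ * w.1 - σI ^ 2 * T / 2)).le
            nlinarith [hav, hcu]
    calc |tdcP g h x σE σI ρ T w|
        = |g (x * Real.exp (σE * w.1 - σE ^ 2 * T / 2))| *
          |h (Real.exp (σI * Real.sqrt (1 - ρ ^ 2) * w.2 + (σI * ρ * w.1 - σI ^ 2 * T / 2)))| := by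
          rw [tdcP, abs_mul]
      _ ≤ (C * ((1 + x) * Real.exp (σE * |w.1|)) ^ p) *
          (C * ((2 * Real.exp (σI * Real.sqrt (1 - ρ ^ 2) * |w.2|)) *
            (2 * Real.exp (σI * |w.1| + σI ^ 2 * T / 2))) ^ p) :=
          mul_le_mul hg1 hh1 (abs_nonneg _) (by positivity)
      _ = (((C * (1 + x) ^ p) * (C * 2 ^ p * Real.exp ((p : ℝ) * (σI ^ 2 * T / 2)))) *
            Real.exp (((p : ℝ) * σE + (p : ℝ) * σI) * |w.1|)) *
          ((2 ^ p) * Real.exp (((p : ℝ) * (σI * Real.sqrt (1 - ρ ^ 2))) * |w.2|)) := by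
          rw [mul_pow, mul_pow, mul_pow, mul_pow, ← Real.exp_nat_mul, ← Real.exp_nat_mul,
            ← Real.exp_nat_mul,
            show ((p : ℝ) * σE + (p : ℝ) * σI) * |w.1|
              = (p : ℝ) * (σE * |w.1|) + (p : ℝ) * (σI * |w.1|) from by ring,
            Real.exp_add,
            show ((p : ℝ) * (σI * Real.sqrt (1 - ρ ^ 2))) * |w.2|
              = (p : ℝ) * (σI * Real.sqrt (1 - ρ ^ 2) * |w.2|) from by ring,
            show (p : ℝ) * (σI * |w.1| + σI ^ 2 * T / 2)
              = (p : ℝ) * (σI * |w.1|) + (p : ℝ) * (σI ^ 2 * T / 2) from by ring,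
            Real.exp_add]
          ring
  have core := tdc_core hT ha (tdcP g h x σE σI ρ T) hPmeas
    ((C * (1 + x) ^ p) * (C * 2 ^ p * Real.exp ((p : ℝ) * (σI ^ 2 * T / 2))))
    ((p : ℝ) * σE + (p : ℝ) * σI) (2 ^ p) ((p : ℝ) * (σI * Real.sqrt (1 - ρ ^ 2)))
    (by positivity) (by positivity) hPb hy
  -- value transfer
  have hval : ∀ y' : ℝ, 0 < y' →
      (∫ w : ℝ × ℝ,
          g (x * Real.exp (σE * w.1 - σE ^ 2 * T / 2)) *
            h (y' * Real.exp (σI * (ρ * w.1 + Real.sqrt (1 - ρ ^ 2) * w.2) - σI ^ 2 * T / 2))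
          ∂((gaussianReal 0 T.toNNReal).prod (gaussianReal 0 T.toNNReal)))
        = ∫ w : ℝ × ℝ,
            tdcP g h x σE σI ρ T w * ((Real.sqrt (2 * Real.pi * T))⁻¹ *
              Real.exp (-(w.2 - Real.log y' / (σI * Real.sqrt (1 - ρ ^ 2))) ^ 2 / (2 * T)))
          ∂((gaussianReal 0 T.toNNReal).prod volume) := by
    intro y' hy'
    rw [tdc_integral_prod_gauss hT,
      ← tdc_integral_shift_snd (Real.log y' / (σI * Real.sqrt (1 - ρ ^ 2)))
        (fun w : ℝ × ℝ => tdcP g h x σE σI ρ T w * ((Real.sqrt (2 * Real.pi * T))⁻¹ *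
          Real.exp (-(w.2 - Real.log y' / (σI * Real.sqrt (1 - ρ ^ 2))) ^ 2 / (2 * T))))]
    congr 1
    funext w
    simp only [tdcP, add_sub_cancel_right]
    rw [tdc_pdf_eq hT,
      show σI * Real.sqrt (1 - ρ ^ 2) *
            (w.2 + Real.log y' / (σI * Real.sqrt (1 - ρ ^ 2))) +
            (σI * ρ * w.1 - σI ^ 2 * T / 2)
          = Real.log y' + (σI * (ρ * w.1 + Real.sqrt (1 - ρ ^ 2) * w.2) - σI ^ 2 * T / 2)
        from by field_simp; ring,
      Real.exp_add, Real.exp_log hy']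
    ring
  -- derivative transfer
  have hder :
      (∫ w : ℝ × ℝ,
          g (x * Real.exp (σE * w.1 - σE ^ 2 * T / 2)) *
            h (y * Real.exp (σI * (ρ * w.1 + Real.sqrt (1 - ρ ^ 2) * w.2) - σI ^ 2 * T / 2)) *
            (w.2 / (y * σI * Real.sqrt (1 - ρ ^ 2) * T))
        ∂((gaussianReal 0 T.toNNReal).prod (gaussianReal 0 T.toNNReal)))
        = ∫ w : ℝ × ℝ,
            tdcP g h x σE σI ρ T w * (((Real.sqrt (2 * Real.pi * T))⁻¹ *
              Real.exp (-(w.2 - Real.log y / (σI * Real.sqrt (1 - ρ ^ 2))) ^ 2 / (2 * T))) *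
              ((w.2 - Real.log y / (σI * Real.sqrt (1 - ρ ^ 2))) *
                (T * (σI * Real.sqrt (1 - ρ ^ 2)) * y)⁻¹))
          ∂((gaussianReal 0 T.toNNReal).prod volume) := by
    rw [tdc_integral_prod_gauss hT,
      ← tdc_integral_shift_snd (Real.log y / (σI * Real.sqrt (1 - ρ ^ 2)))
        (fun w : ℝ × ℝ => tdcP g h x σE σI ρ T w * (((Real.sqrt (2 * Real.pi * T))⁻¹ *
          Real.exp (-(w.2 - Real.log y / (σI * Real.sqrt (1 - ρ ^ 2))) ^ 2 / (2 * T))) *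
          ((w.2 - Real.log y / (σI * Real.sqrt (1 - ρ ^ 2))) *
            (T * (σI * Real.sqrt (1 - ρ ^ 2)) * y)⁻¹)))]
    congr 1
    funext w
    simp only [tdcP, add_sub_cancel_right]
    rw [tdc_pdf_eq hT,
      show σI * Real.sqrt (1 - ρ ^ 2) *
            (w.2 + Real.log y / (σI * Real.sqrt (1 - ρ ^ 2))) +
            (σI * ρ * w.1 - σI ^ 2 * T / 2)
          = Real.log y + (σI * (ρ * w.1 + Real.sqrt (1 - ρ ^ 2) * w.2) - σI ^ 2 * T / 2)
        from by field_simp; ring,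
      Real.exp_add, Real.exp_log hy]
    have hTne : T ≠ 0 := ne_of_gt hT
    have hyne : y ≠ 0 := ne_of_gt hy
    field_simp
  rw [hder]
  apply core.congr_of_eventuallyEq
  filter_upwards [eventually_gt_nhds hy] with y' hy'
  exact hval y' hy'
end

section
/- Energy delta of the product call quanto option (payoff of Eq. (9)): in the independent lognormal futures model, for strikes K_E, K_I ∈ ℝ the map x ↦ ∫∫ max(F^E(x,u) − K_E, 0)·max(F^I(y,v) − K_I, 0) dμ(u,v) is differentiable at every x > 0, with derivative Δ_E = ∫∫ max(F^E(x,u) − K_E, 0)·max(F^I(y,v) − K_I, 0) · u/(x·σ_E·T) dμ(u,v). In particular the Malliavin-weight representation of the delta holds even though the call payoff x ↦ max(x − K_E, 0) is not differentiable. -/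
open MeasureTheory ProbabilityTheory

open Real Filter

lemma gauss_integral_eq (v : NNReal) (hv : v ≠ 0) (f : ℝ → ℝ) :
    ∫ u, f u ∂(gaussianReal 0 v) = ∫ u, gaussianPDFReal 0 v u * f u := by
  rw [gaussianReal_of_var_ne_zero 0 hv, gaussianPDF_def]
  rw [show (fun x => ENNReal.ofReal (gaussianPDFReal 0 v x))
      = fun x => ((Real.toNNReal (gaussianPDFReal 0 v x) : NNReal) : ENNReal) from rfl]
  rw [integral_withDensity_eq_integral_smul ((measurable_gaussianPDFReal 0 v).real_toNNReal) f]
  congr 1; funext u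
  rw [NNReal.smul_def, Real.coe_toNNReal _ (gaussianPDFReal_nonneg 0 v u), smul_eq_mul]

lemma gauss_integrable_iff (v : NNReal) (hv : v ≠ 0) (f : ℝ → ℝ) :
    Integrable f (gaussianReal 0 v) ↔ Integrable (fun u => gaussianPDFReal 0 v u * f u) := by
  rw [gaussianReal_of_var_ne_zero 0 hv, gaussianPDF_def]
  rw [show (fun x => ENNReal.ofReal (gaussianPDFReal 0 v x))
      = fun x => ((Real.toNNReal (gaussianPDFReal 0 v x) : NNReal) : ENNReal) from rfl]
  rw [integrable_withDensity_iff_integrable_smul ((measurable_gaussianPDFReal 0 v).real_toNNReal)]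
  constructor <;> intro h <;> refine h.congr (Eventually.of_forall fun u => ?_) <;> simp <;>
    rw [NNReal.smul_def, Real.coe_toNNReal _ (gaussianPDFReal_nonneg 0 v u), smul_eq_mul]

lemma phi_eq {T : ℝ} (hT : 0 < T) (u : ℝ) :
    gaussianPDFReal 0 T.toNNReal u = (Real.sqrt (2 * π * T))⁻¹ * Real.exp (-u ^ 2 / (2 * T)) := by
  rw [gaussianPDFReal]
  rw [Real.coe_toNNReal T hT.le]
  ring_nf

lemma hasDerivAt_phi {T : ℝ} (hT : 0 < T) (u : ℝ) :
    HasDerivAt (gaussianPDFReal 0 T.toNNReal) (-(u / T) * gaussianPDFReal 0 T.toNNReal u) u := by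
  have h1 : (gaussianPDFReal 0 T.toNNReal)
      = fun u => (Real.sqrt (2 * π * T))⁻¹ * Real.exp (-u ^ 2 / (2 * T)) :=
    funext fun u => phi_eq hT u
  rw [h1]
  have h2 : HasDerivAt (fun u : ℝ => -u ^ 2 / (2 * T)) (-(2 * u ^ 1) / (2 * T)) u :=
    ((hasDerivAt_pow 2 u).neg).div_const (2 * T)
  have := (h2.exp).const_mul (Real.sqrt (2 * π * T))⁻¹
  refine this.congr_deriv (Eq.symm ?_)
  field_simp

-- exponent completion: phi * exp(drift) = gaussian around σT
lemma phi_mul_exp {T σ : ℝ} (hT : 0 < T) (u : ℝ) :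
    gaussianPDFReal 0 T.toNNReal u * Real.exp (σ * u - σ ^ 2 * T / 2)
      = (Real.sqrt (2 * π * T))⁻¹ * Real.exp (-(1 / (2 * T)) * (u - σ * T) ^ 2) := by
  rw [phi_eq hT, mul_assoc, ← Real.exp_add]
  congr 2
  field_simp
  ring

lemma phi_eq' {T : ℝ} (hT : 0 < T) (u : ℝ) :
    gaussianPDFReal 0 T.toNNReal u
      = (Real.sqrt (2 * π * T))⁻¹ * Real.exp (-(1 / (2 * T)) * (u - 0) ^ 2) := by
  rw [phi_eq hT]
  congr 1
  · congr 1; field_simp; ring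

lemma integrable_gauss_shape {T : ℝ} (hT : 0 < T) (a : ℝ) :
    Integrable (fun u : ℝ => Real.exp (-(1 / (2 * T)) * (u - a) ^ 2)) := by
  have hb : (0 : ℝ) < 1 / (2 * T) := by positivity
  exact (integrable_exp_neg_mul_sq hb).comp_sub_right a

lemma integrable_mul_gauss_shape {T : ℝ} (hT : 0 < T) (a : ℝ) :
    Integrable (fun u : ℝ => u * Real.exp (-(1 / (2 * T)) * (u - a) ^ 2)) := by
  have hb : (0 : ℝ) < 1 / (2 * T) := by positivity
  have h1 := (integrable_mul_exp_neg_mul_sq hb).comp_sub_right a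
  have h2 := (integrable_gauss_shape hT a).const_mul a
  refine ((h1.add h2).congr (Eventually.of_forall fun u => ?_))
  simp only [Pi.add_apply]
  ring_nf

lemma tendsto_gauss_shape_top {T : ℝ} (hT : 0 < T) (a : ℝ) :
    Tendsto (fun u : ℝ => Real.exp (-(1 / (2 * T)) * (u - a) ^ 2)) atTop (nhds 0) := by
  have hb : (0 : ℝ) < 1 / (2 * T) := by positivity
  have h1 : Tendsto (fun u : ℝ => u - a) atTop atTop :=
    tendsto_atTop_add_const_right atTop (-a) tendsto_id
  have h2 : Tendsto (fun u : ℝ => (u - a) ^ 2) atTop atTop :=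
    (tendsto_pow_atTop two_ne_zero).comp h1
  have h3 : Tendsto (fun u : ℝ => (1 / (2 * T)) * (u - a) ^ 2) atTop atTop :=
    h2.const_mul_atTop hb
  have h4 : Tendsto (fun u : ℝ => -(1 / (2 * T)) * (u - a) ^ 2) atTop atBot := by
    simp only [neg_mul]
    exact tendsto_neg_atTop_atBot.comp h3
  exact Real.tendsto_exp_atBot.comp h4

lemma tendsto_gauss_shape_bot {T : ℝ} (hT : 0 < T) (a : ℝ) :
    Tendsto (fun u : ℝ => Real.exp (-(1 / (2 * T)) * (u - a) ^ 2)) atBot (nhds 0) := by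
  have := (tendsto_gauss_shape_top hT (-a)).comp tendsto_neg_atBot_atTop
  refine this.congr fun u => ?_
  simp only [Function.comp_apply]
  congr 1
  ring

lemma key_identity (T σ K x : ℝ) (hT : 0 < T) (hσ : 0 < σ) (hx : 0 < x) :
    ∫ u, (if K < x * Real.exp (σ * u - σ ^ 2 * T / 2) then Real.exp (σ * u - σ ^ 2 * T / 2) else 0)
        ∂(gaussianReal 0 T.toNNReal)
      = ∫ u, max (x * Real.exp (σ * u - σ ^ 2 * T / 2) - K) 0 * (u / (x * σ * T))
        ∂(gaussianReal 0 T.toNNReal) := by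
  have hv : T.toNNReal ≠ 0 := (Real.toNNReal_pos.mpr hT).ne'
  rw [gauss_integral_eq _ hv, gauss_integral_eq _ hv]
  set φ : ℝ → ℝ := gaussianPDFReal 0 T.toNNReal with hφ_def
  set E : ℝ → ℝ := fun u => Real.exp (σ * u - σ ^ 2 * T / 2) with hE_def
  have hEpos : ∀ u, 0 < E u := fun u => Real.exp_pos _
  have hφpos : ∀ u, 0 < φ u := fun u => gaussianPDFReal_pos 0 T.toNNReal u hv
  have hE : ∀ u, HasDerivAt E (σ * E u) u := by
    intro u
    have h1 : HasDerivAt (fun u : ℝ => σ * u - σ ^ 2 * T / 2) σ u := by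
      simpa using ((hasDerivAt_id u).const_mul σ).sub_const (σ ^ 2 * T / 2)
    rw [hE_def]
    simpa [mul_comm] using h1.exp
  -- derivative of H
  set H : ℝ → ℝ := fun u => (x * E u - K) * φ u / (x * σ) with hH_def
  set h' : ℝ → ℝ := fun u => φ u * E u - φ u * ((x * E u - K) * (u / (x * σ * T))) with hh'_def
  have hH : ∀ u, HasDerivAt H (h' u) u := by
    intro u
    have h1 : HasDerivAt (fun u => x * E u - K) (x * (σ * E u)) u := ((hE u).const_mul x).sub_const K
    have h3 := (h1.mul (hasDerivAt_phi hT u)).div_const (x * σ)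
    refine h3.congr_deriv (Eq.symm ?_)
    rw [hh'_def, hφ_def]
    field_simp
    ring
  -- integrability
  have J1 : Integrable (fun u => φ u * E u) := by
    have := (integrable_gauss_shape hT (σ * T)).const_mul (Real.sqrt (2 * π * T))⁻¹
    refine this.congr (Eventually.of_forall fun u => ?_)
    exact (phi_mul_exp hT u).symm
  have J2 : Integrable (fun u => φ u * E u * u) := by
    have := (integrable_mul_gauss_shape hT (σ * T)).const_mul (Real.sqrt (2 * π * T))⁻¹
    refine this.congr (Eventually.of_forall fun u => ?_)
    simp only [hφ_def, hE_def, phi_mul_exp (σ := σ) hT]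
    ring
  have J4 : Integrable (fun u => φ u * u) := by
    have := (integrable_mul_gauss_shape hT 0).const_mul (Real.sqrt (2 * π * T))⁻¹
    refine this.congr (Eventually.of_forall fun u => ?_)
    simp only [hφ_def, phi_eq' hT]
    ring
  have hI2 : Integrable (fun u => φ u * ((x * E u - K) * (u / (x * σ * T)))) := by
    have := (J2.const_mul (1 / (σ * T))).sub (J4.const_mul (K / (x * σ * T)))
    refine this.congr (Eventually.of_forall fun u => ?_)
    simp only [Pi.sub_apply]
    field_simp
  have hh'int : Integrable h' := by rw [hh'_def]; exact J1.sub hI2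
  -- tendsto of H at ±∞
  have P1top : Tendsto (fun u => φ u * E u) atTop (nhds 0) := by
    have := (tendsto_gauss_shape_top hT (σ * T)).const_mul (Real.sqrt (2 * π * T))⁻¹
    rw [mul_zero] at this
    refine this.congr fun u => ?_
    exact (phi_mul_exp hT u).symm
  have P1bot : Tendsto (fun u => φ u * E u) atBot (nhds 0) := by
    have := (tendsto_gauss_shape_bot hT (σ * T)).const_mul (Real.sqrt (2 * π * T))⁻¹
    rw [mul_zero] at this
    refine this.congr fun u => ?_
    exact (phi_mul_exp hT u).symm
  have P2top : Tendsto φ atTop (nhds 0) := by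
    have := (tendsto_gauss_shape_top hT 0).const_mul (Real.sqrt (2 * π * T))⁻¹
    rw [mul_zero] at this
    refine this.congr fun u => ?_
    exact (phi_eq' hT u).symm
  have P2bot : Tendsto φ atBot (nhds 0) := by
    have := (tendsto_gauss_shape_bot hT 0).const_mul (Real.sqrt (2 * π * T))⁻¹
    rw [mul_zero] at this
    refine this.congr fun u => ?_
    exact (phi_eq' hT u).symm
  have htop : Tendsto H atTop (nhds 0) := by
    have := ((P1top.const_mul x).sub (P2top.const_mul K)).div_const (x * σ)
    rw [mul_zero, mul_zero, sub_zero, zero_div] at this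
    refine this.congr fun u => ?_
    rw [hH_def]; ring
  have hbot : Tendsto H atBot (nhds 0) := by
    have := ((P1bot.const_mul x).sub (P2bot.const_mul K)).div_const (x * σ)
    rw [mul_zero, mul_zero, sub_zero, zero_div] at this
    refine this.congr fun u => ?_
    rw [hH_def]; ring
  rcases le_or_gt K 0 with hK | hK
  · -- K ≤ 0 : everything is in the money
    have hpos : ∀ u, K < x * E u := fun u => lt_of_le_of_lt hK (by positivity)
    have lhs_eq : (fun u => φ u * (if K < x * E u then E u else 0)) = fun u => φ u * E u :=
      funext fun u => by rw [if_pos (hpos u)]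
    have rhs_eq : (fun u => φ u * (max (x * E u - K) 0 * (u / (x * σ * T))))
        = fun u => φ u * ((x * E u - K) * (u / (x * σ * T))) :=
      funext fun u => by rw [max_eq_left (sub_nonneg.mpr (hpos u).le)]
    rw [lhs_eq, rhs_eq]
    have hz := integral_of_hasDerivAt_of_tendsto hH hh'int hbot htop
    rw [sub_zero] at hz
    have : ∫ u, h' u = (∫ u, φ u * E u) - ∫ u, φ u * ((x * E u - K) * (u / (x * σ * T))) := by
      rw [hh'_def]; exact integral_sub J1 hI2
    rw [this] at hz
    linarith [hz]
  · -- K > 0 : in the money iff u > u₀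
    set u₀ : ℝ := (Real.log (K / x) + σ ^ 2 * T / 2) / σ with hu₀
    have hσu₀ : σ * u₀ = Real.log (K / x) + σ ^ 2 * T / 2 := by
      rw [hu₀, mul_comm, div_mul_cancel₀ _ hσ.ne']
    have hxE : ∀ u, x * E u = Real.exp (Real.log x + (σ * u - σ ^ 2 * T / 2)) := by
      intro u; rw [Real.exp_add, Real.exp_log hx, hE_def]
    have heq0 : x * E u₀ = K := by
      rw [hxE u₀]
      rw [show Real.log x + (σ * u₀ - σ ^ 2 * T / 2) = Real.log K by
        rw [hσu₀, Real.log_div hK.ne' hx.ne']; ring]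
      exact Real.exp_log hK
    have hiff : ∀ u, (K < x * E u ↔ u₀ < u) := by
      intro u
      rw [hxE u, ← Real.exp_log hK, Real.exp_lt_exp, hu₀, div_lt_iff₀ hσ,
        Real.log_div hK.ne' hx.ne']
      constructor <;> intro h <;> nlinarith
    -- reduce to integrals over Ioi u₀
    have lhs_eq : ∫ u, φ u * (if K < x * E u then E u else 0)
        = ∫ u in Set.Ioi u₀, φ u * E u := by
      rw [← setIntegral_eq_integral_of_forall_compl_eq_zero (s := Set.Ioi u₀)
        (fun u hu => by rw [if_neg (fun hc => hu ((hiff u).mp hc)), mul_zero])]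
      exact setIntegral_congr_fun measurableSet_Ioi fun u hu => by
        rw [if_pos ((hiff u).mpr hu)]
    have rhs_eq : ∫ u, φ u * (max (x * E u - K) 0 * (u / (x * σ * T)))
        = ∫ u in Set.Ioi u₀, φ u * ((x * E u - K) * (u / (x * σ * T))) := by
      rw [← setIntegral_eq_integral_of_forall_compl_eq_zero (s := Set.Ioi u₀)
        (fun u hu => by
          rw [max_eq_right (sub_nonpos.mpr (not_lt.mp (fun hc => hu ((hiff u).mp hc))))]
          ring)]
      exact setIntegral_congr_fun measurableSet_Ioi fun u hu => by
        rw [max_eq_left (sub_nonneg.mpr ((hiff u).mpr hu).le)]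
    rw [lhs_eq, rhs_eq]
    have hz := integral_Ioi_of_hasDerivAt_of_tendsto
      ((hH u₀).continuousAt.continuousWithinAt) (fun u _ => hH u) hh'int.integrableOn htop
    rw [show H u₀ = 0 by rw [hH_def]; simp [heq0], sub_zero] at hz
    have : ∫ u in Set.Ioi u₀, h' u
        = (∫ u in Set.Ioi u₀, φ u * E u)
          - ∫ u in Set.Ioi u₀, φ u * ((x * E u - K) * (u / (x * σ * T))) := by
      rw [hh'_def]; exact integral_sub J1.integrableOn hI2.integrableOn
    rw [this] at hz
    linarith [hz]

lemma continuous_phi (μ : ℝ) (v : NNReal) : Continuous (gaussianPDFReal μ v) := by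
  unfold gaussianPDFReal
  fun_prop

lemma J1' {T σ : ℝ} (hT : 0 < T) (hσ : 0 < σ) :
    Integrable (fun u => gaussianPDFReal 0 T.toNNReal u * Real.exp (σ * u - σ ^ 2 * T / 2)) := by
  have := (integrable_gauss_shape hT (σ * T)).const_mul (Real.sqrt (2 * π * T))⁻¹
  exact this.congr (Eventually.of_forall fun u => (phi_mul_exp hT u).symm)

lemma oneD (T σ K x : ℝ) (hT : 0 < T) (hσ : 0 < σ) (hx : 0 < x) :
    HasDerivAt
      (fun x' : ℝ => ∫ u, max (x' * Real.exp (σ * u - σ ^ 2 * T / 2) - K) 0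
        ∂(gaussianReal 0 T.toNNReal))
      (∫ u, max (x * Real.exp (σ * u - σ ^ 2 * T / 2) - K) 0 * (u / (x * σ * T))
        ∂(gaussianReal 0 T.toNNReal)) x := by
  have hv : T.toNNReal ≠ 0 := (Real.toNNReal_pos.mpr hT).ne'
  have hφcont : Continuous (gaussianPDFReal 0 T.toNNReal) := continuous_phi 0 _
  have hφnonneg : ∀ u, 0 ≤ gaussianPDFReal 0 T.toNNReal u := gaussianPDFReal_nonneg 0 _
  have hEcont : Continuous (fun u : ℝ => Real.exp (σ * u - σ ^ 2 * T / 2)) := by fun_prop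
  have hEpos : ∀ u : ℝ, 0 < Real.exp (σ * u - σ ^ 2 * T / 2) := fun u => Real.exp_pos _
  set γ := gaussianReal 0 T.toNNReal with hγ
  set E : ℝ → ℝ := fun u => Real.exp (σ * u - σ ^ 2 * T / 2) with hE_def
  set F' : ℝ → ℝ := fun u => if K < x * E u then E u else 0 with hF'_def
  have hmeas : ∀ᶠ x' in nhds x, AEStronglyMeasurable (fun u => max (x' * E u - K) 0) γ :=
    Eventually.of_forall fun x' =>
      (((continuous_const.mul hEcont).sub continuous_const).max continuous_const).aestronglyMeasurable
  have hF_int : Integrable (fun u => max (x * E u - K) 0) γ := by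
    rw [gauss_integrable_iff _ hv]
    refine Integrable.mono' (((J1' hT hσ).const_mul x).add
      ((integrable_gaussianPDFReal 0 T.toNNReal).const_mul |K|))
      ((hφcont.mul (((continuous_const.mul hEcont).sub continuous_const).max
        continuous_const)).aestronglyMeasurable)
      (Eventually.of_forall fun u => ?_)
    have h1 : max (x * E u - K) 0 ≤ x * E u + |K| := by
      refine max_le ?_ (by positivity)
      have := neg_abs_le K
      nlinarith [hEpos u]
    have h2 : (0:ℝ) ≤ max (x * E u - K) 0 := le_max_right _ _
    rw [Real.norm_eq_abs, abs_of_nonneg (mul_nonneg (hφnonneg u) h2)]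
    have := mul_le_mul_of_nonneg_left h1 (hφnonneg u)
    calc gaussianPDFReal 0 T.toNNReal u * max (x * E u - K) 0
        ≤ gaussianPDFReal 0 T.toNNReal u * (x * E u + |K|) := this
      _ = x * (gaussianPDFReal 0 T.toNNReal u * E u) + |K| * gaussianPDFReal 0 T.toNNReal u := by ring
  have hF'_meas : AEStronglyMeasurable F' γ := by
    refine (Measurable.ite ?_ hEcont.measurable measurable_const).aestronglyMeasurable
    exact measurableSet_lt measurable_const (continuous_const.mul hEcont).measurable
  have hlip : ∀ᵐ u ∂γ, LipschitzOnWith (Real.nnabs (E u))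
      (fun x' => max (x' * E u - K) 0) (Metric.ball x 1) := by
    refine ae_of_all _ fun u => ?_
    have hl : LipschitzWith (Real.nnabs (E u)) (fun x' : ℝ => max (x' * E u - K) 0) := by
      refine LipschitzWith.of_dist_le_mul fun a b => ?_
      rw [Real.dist_eq, Real.dist_eq, Real.coe_nnabs]
      calc |max (a * E u - K) 0 - max (b * E u - K) 0|
          ≤ |(a * E u - K) - (b * E u - K)| := abs_max_sub_max_le_abs _ _ _
        _ = |E u| * |a - b| := by rw [← abs_mul]; ring_nf
    exact hl.lipschitzOnWith
  have hbound_int : Integrable E γ := by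
    rw [gauss_integrable_iff _ hv]
    exact J1' hT hσ
  have hnull : γ {u | x * E u = K} = 0 := by
    refine measure_mono_null (fun u hu => ?_)
      ((gaussianReal_absolutelyContinuous 0 hv)
        (measure_singleton ((Real.log (K / x) + σ ^ 2 * T / 2) / σ)))
    · 
      have hu' : x * E u = K := hu
      have hK : 0 < K := hu' ▸ mul_pos hx (hEpos u)
      have hlog : σ * u - σ ^ 2 * T / 2 = Real.log (K / x) := by
        have hEu : E u = K / x := by field_simp [mul_comm] at hu' ⊢; linarith [hu']
        rw [← Real.log_exp (σ * u - σ ^ 2 * T / 2)]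
        exact congrArg Real.log hEu
      have : u = (Real.log (K / x) + σ ^ 2 * T / 2) / σ := by
        rw [← hlog]; field_simp; ring
      exact this
  have h_diff : ∀ᵐ u ∂γ, HasDerivAt (fun x' => max (x' * E u - K) 0) (F' u) x := by
    have hne : ∀ᵐ u ∂γ, x * E u ≠ K := by
      rw [ae_iff]
      convert hnull using 2
      simp
    filter_upwards [hne] with u hu
    rcases hu.lt_or_gt with h | h
    · have hev : ∀ᶠ x' in nhds x, max (x' * E u - K) 0 = 0 := by
        have hopen : IsOpen {x' : ℝ | x' * E u < K} :=
          isOpen_lt (continuous_id.mul continuous_const) continuous_const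
        filter_upwards [hopen.mem_nhds h] with a ha
        have ha' : a * E u < K := ha
        exact max_eq_right (by linarith)
      rw [hF'_def]
      simp only [if_neg (not_lt.mpr h.le)]
      exact (hasDerivAt_const x (0:ℝ)).congr_of_eventuallyEq hev
    · have hev : ∀ᶠ x' in nhds x, max (x' * E u - K) 0 = x' * E u - K := by
        have hopen : IsOpen {x' : ℝ | K < x' * E u} :=
          isOpen_lt continuous_const (continuous_id.mul continuous_const)
        filter_upwards [hopen.mem_nhds h] with a ha
        have ha' : K < a * E u := ha
        exact max_eq_left (by linarith)
      rw [hF'_def]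
      simp only [if_pos h]
      have base : HasDerivAt (fun x' : ℝ => x' * E u - K) (E u) x :=
        (hasDerivAt_mul_const (E u)).sub_const K
      exact base.congr_of_eventuallyEq hev
  obtain ⟨-, hd⟩ := hasDerivAt_integral_of_dominated_loc_of_lip
    (F := fun x' u => max (x' * E u - K) 0) (bound := E) (Metric.ball_mem_nhds x one_pos) hmeas hF_int hF'_meas hlip
    hbound_int h_diff
  have hkey : ∫ u, F' u ∂γ = ∫ u, max (x * E u - K) 0 * (u / (x * σ * T)) ∂γ :=
    key_identity T σ K x hT hσ hx
  rwa [hkey] at hd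

/-- **Energy delta of the product call quanto option (independent model).**
For the payoff `max(Fᴱ(x,u) − K_E, 0) · max(Fᴵ(y,v) − K_I, 0)`, the price is
differentiable in the initial energy price `x > 0`, with derivative given by the
Malliavin weight `u / (x σ_E T)` — even though the call payoff is not differentiable. -/
theorem energy_delta_product_call_independent
    (T σE σI : ℝ) (hT : 0 < T) (hσE : 0 < σE) (hσI : 0 < σI)
    (KE KI : ℝ) (x y : ℝ) (hx : 0 < x) (hy : 0 < y) :
    HasDerivAt
      (fun x' : ℝ =>
        ∫ w : ℝ × ℝ,
          max (x' * Real.exp (σE * w.1 - σE ^ 2 * T / 2) - KE) 0 *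
            max (y * Real.exp (σI * w.2 - σI ^ 2 * T / 2) - KI) 0
          ∂((gaussianReal 0 T.toNNReal).prod (gaussianReal 0 T.toNNReal)))
      (∫ w : ℝ × ℝ,
          max (x * Real.exp (σE * w.1 - σE ^ 2 * T / 2) - KE) 0 *
            max (y * Real.exp (σI * w.2 - σI ^ 2 * T / 2) - KI) 0 *
            (w.1 / (x * σE * T))
        ∂((gaussianReal 0 T.toNNReal).prod (gaussianReal 0 T.toNNReal)))
      x := by
  have hfac : (fun x' : ℝ =>
      ∫ w : ℝ × ℝ,
        max (x' * Real.exp (σE * w.1 - σE ^ 2 * T / 2) - KE) 0 *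
          max (y * Real.exp (σI * w.2 - σI ^ 2 * T / 2) - KI) 0
        ∂((gaussianReal 0 T.toNNReal).prod (gaussianReal 0 T.toNNReal)))
      = fun x' : ℝ =>
        (∫ u, max (x' * Real.exp (σE * u - σE ^ 2 * T / 2) - KE) 0 ∂(gaussianReal 0 T.toNNReal)) *
          ∫ v, max (y * Real.exp (σI * v - σI ^ 2 * T / 2) - KI) 0 ∂(gaussianReal 0 T.toNNReal) :=
    funext fun x' => integral_prod_mul
      (f := fun u => max (x' * Real.exp (σE * u - σE ^ 2 * T / 2) - KE) 0)
      (g := fun v => max (y * Real.exp (σI * v - σI ^ 2 * T / 2) - KI) 0)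
  rw [hfac]
  have hder := (oneD T σE KE x hT hσE hx).mul_const
    (∫ v, max (y * Real.exp (σI * v - σI ^ 2 * T / 2) - KI) 0 ∂(gaussianReal 0 T.toNNReal))
  refine hder.congr_deriv (Eq.symm ?_)
  rw [show (fun w : ℝ × ℝ =>
        max (x * Real.exp (σE * w.1 - σE ^ 2 * T / 2) - KE) 0 *
          max (y * Real.exp (σI * w.2 - σI ^ 2 * T / 2) - KI) 0 * (w.1 / (x * σE * T)))
      = fun w : ℝ × ℝ =>
        (fun u => max (x * Real.exp (σE * u - σE ^ 2 * T / 2) - KE) 0 * (u / (x * σE * T))) w.1 *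
          (fun v => max (y * Real.exp (σI * v - σI ^ 2 * T / 2) - KI) 0) w.2
      from funext fun w => by ring]
  exact integral_prod_mul
    (f := fun u => max (x * Real.exp (σE * u - σE ^ 2 * T / 2) - KE) 0 * (u / (x * σE * T)))
    (g := fun v => max (y * Real.exp (σI * v - σI ^ 2 * T / 2) - KI) 0)
end

section
/- Cross-gamma of the product call quanto option (payoff of Eq. (9)): in the independent lognormal futures model, for strikes K_E, K_I ∈ ℝ the price C(x,y) = ∫∫ max(F^E(x,u) − K_E, 0)·max(F^I(y,v) − K_I, 0) dμ(u,v) has a mixed second partial derivative ∂²C/∂x∂y at every x > 0, y > 0, equal to Δ_{EI} = ∫∫ max(F^E(x,u) − K_E, 0)·max(F^I(y,v) − K_I, 0) · (u·v)/(x·y·σ_E·σ_I·T²) dμ(u,v). -/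
open MeasureTheory ProbabilityTheory Real Filter Set Topology

noncomputable def gpdf (T u : ℝ) : ℝ := (Real.sqrt (2 * Real.pi * T))⁻¹ * Real.exp (-u^2/(2*T))



lemma gpdf_nonneg (T u : ℝ) : 0 ≤ gpdf T u := by
  unfold gpdf; positivity

lemma continuous_gpdf (T : ℝ) : Continuous (gpdf T) := by
  unfold gpdf; continuity

lemma integrable_exp_lin_quad {b : ℝ} (hb : 0 < b) (c : ℝ) :
    Integrable (fun u : ℝ => Real.exp (c*u - b*u^2)) := by
  have h : (fun u : ℝ => Real.exp (c*u - b*u^2))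
      = fun u => Real.exp (c^2/(4*b)) * Real.exp (-b*(u - c/(2*b))^2) := by
    funext u
    rw [← Real.exp_add]
    congr 1
    field_simp
    ring
  rw [h]
  exact ((integrable_exp_neg_mul_sq hb).comp_sub_right (c/(2*b))).const_mul _

lemma abs_le_exp_add (u : ℝ) : |u| ≤ Real.exp u + Real.exp (-u) := by
  have h1 : |u| ≤ Real.exp |u| := (Real.add_one_le_exp |u|).trans' (by linarith [abs_nonneg u])
  rcases abs_cases u with ⟨h, _⟩ | ⟨h, _⟩
  · rw [h] at h1; nlinarith [Real.exp_pos (-u), Real.exp_pos u]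
  · rw [h] at h1; nlinarith [Real.exp_pos (-u), Real.exp_pos u]

lemma integrable_abs_exp_lin_quad {b : ℝ} (hb : 0 < b) (c : ℝ) :
    Integrable (fun u : ℝ => |u| * Real.exp (c*u - b*u^2)) := by
  refine ((integrable_exp_lin_quad hb (c+1)).add (integrable_exp_lin_quad hb (c-1))).mono'
    ?_ (ae_of_all _ fun u => ?_)
  · exact (continuous_abs.mul (by continuity)).aestronglyMeasurable
  · have h0 : (0:ℝ) ≤ |u| * Real.exp (c*u - b*u^2) := by positivity
    rw [Real.norm_eq_abs, abs_of_nonneg h0]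
    calc |u| * Real.exp (c*u - b*u^2)
        ≤ (Real.exp u + Real.exp (-u)) * Real.exp (c*u - b*u^2) := by
          exact mul_le_mul_of_nonneg_right (abs_le_exp_add u) (Real.exp_pos _).le
      _ = Real.exp ((c+1)*u - b*u^2) + Real.exp ((c-1)*u - b*u^2) := by
          rw [add_mul, ← Real.exp_add, ← Real.exp_add]; ring_nf



lemma hasDerivAt_gpdf {T : ℝ} (hT : 0 < T) (u : ℝ) :
    HasDerivAt (gpdf T) (-(u/T) * gpdf T u) u := by
  have h1 : HasDerivAt (fun u : ℝ => -u^2/(2*T)) (-(u/T)) u := by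
    have := ((hasDerivAt_pow 2 u).neg.div_const (2*T))
    refine this.congr_deriv ?_
    field_simp
    ring
  have h2 := (h1.exp).const_mul (Real.sqrt (2 * Real.pi * T))⁻¹
  refine h2.congr_deriv ?_
  unfold gpdf
  ring

lemma tendsto_exp_neg_sq {b : ℝ} (hb : 0 < b) (d : ℝ) :
    Tendsto (fun u : ℝ => Real.exp (-b*(u - d)^2)) atTop (𝓝 0) ∧
    Tendsto (fun u : ℝ => Real.exp (-b*(u - d)^2)) atBot (𝓝 0) := by
  have key : ∀ l : Filter ℝ, Tendsto (fun u : ℝ => |u - d|) l atTop →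
      Tendsto (fun u : ℝ => Real.exp (-b*(u - d)^2)) l (𝓝 0) := by
    intro l hl
    have h2 : Tendsto (fun u : ℝ => -b*(u - d)^2) l atBot := by
      have h3 : Tendsto (fun u : ℝ => b * |u - d|^2) l atTop :=
        (tendsto_pow_atTop two_ne_zero |>.comp hl).const_mul_atTop hb
      have h4 : (fun u : ℝ => -b*(u - d)^2) = fun u => -(b * |u - d|^2) := by
        funext u; rw [sq_abs]; ring
      rw [h4]
      exact tendsto_neg_atBot_iff.mpr h3
    exact Real.tendsto_exp_atBot.comp h2
  constructor
  · refine key _ ?_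
    exact tendsto_abs_atTop_atTop.comp (tendsto_atTop_add_const_right _ (-d) tendsto_id)
  · refine key _ ?_
    exact tendsto_abs_atBot_atTop.comp (tendsto_atBot_add_const_right _ (-d) tendsto_id)

lemma gpdf_mul_exp_eq {T : ℝ} (hT : 0 < T) (a : ℝ) :
    (fun u => gpdf T u * Real.exp (a*u)) =
      fun u => ((Real.sqrt (2 * Real.pi * T))⁻¹ * Real.exp (a^2/(4*(1/(2*T))))) *
        Real.exp (-(1/(2*T))*(u - a/(2*(1/(2*T))))^2) := by
  funext u
  unfold gpdf
  simp only [mul_assoc, ← Real.exp_add]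
  congr 1
  field_simp
  ring

lemma integrable_gpdf_exp {T : ℝ} (hT : 0 < T) (a : ℝ) :
    Integrable (fun u => gpdf T u * Real.exp (a*u)) := by
  rw [gpdf_mul_exp_eq hT a]
  have hb : (0:ℝ) < 1/(2*T) := by positivity
  exact ((integrable_exp_neg_mul_sq hb).comp_sub_right _).const_mul _

lemma tendsto_gpdf_exp {T : ℝ} (hT : 0 < T) (a : ℝ) :
    Tendsto (fun u => gpdf T u * Real.exp (a*u)) atTop (𝓝 0) ∧
    Tendsto (fun u => gpdf T u * Real.exp (a*u)) atBot (𝓝 0) := by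
  rw [gpdf_mul_exp_eq hT a]
  have hb : (0:ℝ) < 1/(2*T) := by positivity
  obtain ⟨h1, h2⟩ := tendsto_exp_neg_sq hb (a/(2*(1/(2*T))))
  constructor
  · simpa using h1.const_mul ((Real.sqrt (2 * Real.pi * T))⁻¹ * Real.exp (a^2/(4*(1/(2*T)))))
  · simpa using h2.const_mul ((Real.sqrt (2 * Real.pi * T))⁻¹ * Real.exp (a^2/(4*(1/(2*T)))))


lemma integrable_gpdf_abs_exp {T : ℝ} (hT : 0 < T) (a : ℝ) :
    Integrable (fun u => gpdf T u * (|u| * Real.exp (a*u))) := by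
  have hb : (0:ℝ) < 1/(2*T) := by positivity
  have h := (integrable_abs_exp_lin_quad hb a).const_mul (Real.sqrt (2 * Real.pi * T))⁻¹
  refine h.congr (ae_of_all _ fun u => ?_)
  show (Real.sqrt (2 * Real.pi * T))⁻¹ * (|u| * Real.exp (a*u - 1/(2*T)*u^2))
      = gpdf T u * (|u| * Real.exp (a*u))
  unfold gpdf
  rw [show a*u - 1/(2*T)*u^2 = (-u^2/(2*T)) + a*u by field_simp; ring, Real.exp_add]
  ring

lemma tendsto_gpdf {T : ℝ} (hT : 0 < T) :
    Tendsto (gpdf T) atTop (𝓝 0) ∧ Tendsto (gpdf T) atBot (𝓝 0) := by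
  have h := tendsto_gpdf_exp hT 0
  simpa using h


lemma gpdf_eq {T : ℝ} (hT : 0 < T) : gaussianPDFReal 0 T.toNNReal = gpdf T := by
  funext u
  unfold gaussianPDFReal gpdf
  rw [Real.coe_toNNReal _ hT.le]
  simp

lemma gaussianReal_eq_withDensity {T : ℝ} (hT : 0 < T) :
    gaussianReal 0 T.toNNReal
      = MeasureTheory.Measure.withDensity volume
          (fun u => ((gpdf T u).toNNReal : ENNReal)) := by
  have hv : T.toNNReal ≠ 0 := by
    simp only [ne_eq, Real.toNNReal_eq_zero, not_le]
    exact hT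
  rw [gaussianReal_of_var_ne_zero 0 hv]
  congr 1
  funext u
  rw [gaussianPDF, ENNReal.ofReal, gpdf_eq hT]

lemma gpdf_meas (T : ℝ) : Measurable fun u => (gpdf T u).toNNReal := by
  have : Continuous (gpdf T) := by unfold gpdf; continuity
  exact this.measurable.real_toNNReal

lemma γ_integral_eq {T : ℝ} (hT : 0 < T) (g : ℝ → ℝ) :
    ∫ u, g u ∂(gaussianReal 0 T.toNNReal) = ∫ u, gpdf T u * g u := by
  rw [gaussianReal_eq_withDensity hT,
    integral_withDensity_eq_integral_smul (gpdf_meas T) g]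
  congr 1
  funext u
  rw [NNReal.smul_def, smul_eq_mul, Real.coe_toNNReal _ (by unfold gpdf; positivity)]

lemma γ_int_iff {T : ℝ} (hT : 0 < T) (g : ℝ → ℝ) :
    Integrable g (gaussianReal 0 T.toNNReal) ↔ Integrable (fun u => gpdf T u * g u) volume := by
  rw [gaussianReal_eq_withDensity hT,
    integrable_withDensity_iff_integrable_smul (gpdf_meas T)]
  constructor <;> intro h <;> refine h.congr (ae_of_all _ fun u => ?_) <;>
    simp only [NNReal.smul_def, smul_eq_mul, Real.coe_toNNReal _ (by unfold gpdf; positivity : (0:ℝ) ≤ gpdf T u)]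



lemma ibp (σ T K x : ℝ) (hσ : 0 < σ) (hT : 0 < T) (hx : 0 < x) :
    ∫ u, (if K < x * Real.exp (σ*u - σ^2*T/2) then x*σ*Real.exp (σ*u - σ^2*T/2) else 0)
        * gpdf T u
      = ∫ u, max (x * Real.exp (σ*u - σ^2*T/2) - K) 0 * (u/T) * gpdf T u := by
  set e : ℝ → ℝ := fun u => Real.exp (σ*u - σ^2*T/2) with he_def
  have he_pos : ∀ u, 0 < e u := fun u => Real.exp_pos _
  have he_eq : ∀ u, e u = Real.exp (σ*u) * Real.exp (-(σ^2*T/2)) := fun u => by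
    show Real.exp (σ*u - σ^2*T/2) = _
    rw [show σ*u - σ^2*T/2 = σ*u + -(σ^2*T/2) by ring, Real.exp_add]
  set A : ℝ → ℝ := fun u => (if K < x * e u then x*σ* e u else 0) * gpdf T u with hA_def
  set B : ℝ → ℝ := fun u => max (x * e u - K) 0 * (u/T) * gpdf T u with hB_def
  set Ψ : ℝ → ℝ := fun u => (x * e u - K) * gpdf T u with hΨ_def
  set D : ℝ → ℝ := fun u => x*σ*e u * gpdf T u - (x*e u - K)*(u/T)*gpdf T u with hD_def
  have hΨderiv : ∀ u, HasDerivAt Ψ (D u) u := by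
    intro u
    have h1 : HasDerivAt (fun u : ℝ => σ*u - σ^2*T/2) σ u := by
      simpa using ((hasDerivAt_id u).const_mul σ).sub_const (σ^2*T/2)
    have h2 : HasDerivAt e (e u * σ) u := h1.exp
    have h3 : HasDerivAt (fun u => x * e u - K) (x * (e u * σ)) u := (h2.const_mul x).sub_const K
    have h4 := h3.mul (hasDerivAt_gpdf hT u)
    refine h4.congr_deriv ?_
    rw [hD_def]
    ring
  have hΨeq : Ψ = fun u =>
      (x*Real.exp (-(σ^2*T/2))) * (gpdf T u * Real.exp (σ*u)) - K * gpdf T u := by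
    funext u
    rw [hΨ_def]
    simp only
    rw [he_eq u]
    ring
  have hΨtop : Tendsto Ψ atTop (𝓝 0) := by
    rw [hΨeq]
    have := ((tendsto_gpdf_exp hT σ).1.const_mul (x*Real.exp (-(σ^2*T/2)))).sub
      ((tendsto_gpdf hT).1.const_mul K)
    simpa using this
  have hΨbot : Tendsto Ψ atBot (𝓝 0) := by
    rw [hΨeq]
    have := ((tendsto_gpdf_exp hT σ).2.const_mul (x*Real.exp (-(σ^2*T/2)))).sub
      ((tendsto_gpdf hT).2.const_mul K)
    simpa using this
  have hcont_e : Continuous e := by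
    rw [he_def]; continuity
  have hIA : Integrable A := by
    have hb := (integrable_gpdf_exp hT σ).const_mul (x*σ*Real.exp (-(σ^2*T/2)))
    refine hb.mono' ?_ (ae_of_all _ fun u => ?_)
    · rw [hA_def]
      exact ((Measurable.ite (measurableSet_lt measurable_const
        (continuous_const.mul hcont_e).measurable)
        (continuous_const.mul hcont_e).measurable
        measurable_const).mul (continuous_gpdf T).measurable).aestronglyMeasurable
    · rw [Real.norm_eq_abs, hA_def]
      simp only
      rw [abs_mul, abs_of_nonneg (gpdf_nonneg T u)]
      have hb1 : |if K < x * e u then x*σ* e u else 0| ≤ x*σ*e u := by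
        split_ifs
        · rw [abs_of_nonneg (by positivity)]
        · rw [abs_zero]; positivity
      calc |if K < x * e u then x*σ* e u else 0| * gpdf T u
          ≤ (x*σ*e u) * gpdf T u := by gcongr; exact gpdf_nonneg T u
        _ = x*σ*Real.exp (-(σ^2*T/2)) * (gpdf T u * Real.exp (σ*u)) := by
            rw [he_eq u]; ring
  have hIB : Integrable B := by
    have hb1 := (integrable_gpdf_abs_exp hT σ).const_mul (x*Real.exp (-(σ^2*T/2))/T)
    have hb2 := (integrable_gpdf_abs_exp hT 0).const_mul (|K|/T)
    refine (hb1.add hb2).mono' ?_ (ae_of_all _ fun u => ?_)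
    · rw [hB_def]
      exact (((((continuous_const.mul hcont_e).sub continuous_const).max
        continuous_const).mul (continuous_id.div_const T)).mul
        (continuous_gpdf T)).aestronglyMeasurable
    · rw [Real.norm_eq_abs, hB_def]
      simp only
      rw [abs_mul, abs_mul, abs_of_nonneg (le_max_right _ _),
        abs_of_nonneg (gpdf_nonneg T u), abs_div, abs_of_nonneg hT.le]
      have hb3 : max (x * e u - K) 0 ≤ x * e u + |K| := by
        refine max_le (by nlinarith [neg_abs_le K, he_pos u]) (by positivity)
      calc max (x * e u - K) 0 * (|u|/T) * gpdf T u
          ≤ (x * e u + |K|) * (|u|/T) * gpdf T u := by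
            gcongr
            exact gpdf_nonneg T u
        _ = x*Real.exp (-(σ^2*T/2))/T * (gpdf T u * (|u| * Real.exp (σ*u)))
            + |K|/T * (gpdf T u * (|u| * Real.exp (0*u))) := by
            rw [he_eq u]
            simp only [zero_mul, Real.exp_zero, mul_one]
            field_simp
  have hG : Integrable (fun u => A u - B u) := hIA.sub hIB
  suffices h0 : ∫ u, (A u - B u) = 0 by
    rw [integral_sub hIA hIB] at h0
    linarith
  by_cases hK : K ≤ 0
  · have hactive : ∀ u, K < x * e u := fun u => lt_of_le_of_lt hK (by positivity)
    have hGD : ∀ u, A u - B u = D u := fun u => by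
      rw [hA_def, hB_def, hD_def]
      simp only
      rw [if_pos (hactive u), max_eq_left (by linarith [hactive u] : (0:ℝ) ≤ x*e u - K)]
    have hG' : Integrable D := hG.congr (ae_of_all _ hGD)
    simp only [hGD]
    rw [← intervalIntegral.integral_Iic_add_Ioi hG'.integrableOn hG'.integrableOn]
    have h1 : ∫ u in Iic 0, D u = Ψ 0 - 0 :=
      integral_Iic_of_hasDerivAt_of_tendsto (hΨderiv 0).continuousAt.continuousWithinAt
        (fun u _ => hΨderiv u) hG'.integrableOn hΨbot
    have h2 : ∫ u in Ioi 0, D u = 0 - Ψ 0 :=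
      integral_Ioi_of_hasDerivAt_of_tendsto (hΨderiv 0).continuousAt.continuousWithinAt
        (fun u _ => hΨderiv u) hG'.integrableOn hΨtop
    rw [h1, h2]
    ring
  · push_neg at hK
    set u₀ : ℝ := (Real.log (K/x) + σ^2*T/2)/σ with hu₀
    have he_u₀ : x * e u₀ = K := by
      rw [he_def]
      simp only
      rw [show σ*u₀ - σ^2*T/2 = Real.log (K/x) by rw [hu₀]; field_simp; ring]
      rw [Real.exp_log (by positivity)]
      field_simp
    have hmono : StrictMono (fun u => x * e u) := by
      intro a b hab
      dsimp only
      rw [he_def]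
      exact mul_lt_mul_of_pos_left (Real.exp_lt_exp.mpr (by nlinarith)) hx
    have hle : ∀ u ∈ Iic u₀, x * e u ≤ K := fun u hu => he_u₀ ▸ (hmono.monotone hu)
    have hgt : ∀ u ∈ Ioi u₀, K < x * e u := fun u hu => he_u₀ ▸ hmono hu
    have hzero : ∀ u ∈ Iic u₀, A u - B u = 0 := fun u hu => by
      rw [hA_def, hB_def]
      simp only
      rw [if_neg (not_lt.mpr (hle u hu)), max_eq_right (by linarith [hle u hu])]
      ring
    have hDeq : ∀ u ∈ Ioi u₀, A u - B u = D u := fun u hu => by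
      rw [hA_def, hB_def, hD_def]
      simp only
      rw [if_pos (hgt u hu), max_eq_left (by linarith [hgt u hu])]
    rw [← intervalIntegral.integral_Iic_add_Ioi hG.integrableOn hG.integrableOn]
    have h1 : ∫ u in Iic u₀, (A u - B u) = 0 := by
      rw [setIntegral_congr_fun measurableSet_Iic hzero]
      simp
    have h2 : ∫ u in Ioi u₀, (A u - B u) = 0 - Ψ u₀ := by
      rw [setIntegral_congr_fun measurableSet_Ioi hDeq]
      exact integral_Ioi_of_hasDerivAt_of_tendsto (hΨderiv u₀).continuousAt.continuousWithinAt
        (fun u _ => hΨderiv u) (hG.integrableOn.congr_fun hDeq measurableSet_Ioi) hΨtop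
    have hΨ0 : Ψ u₀ = 0 := by
      rw [hΨ_def]
      simp only
      rw [show x * e u₀ - K = 0 by rw [he_u₀]; ring]
      ring
    rw [h1, h2, hΨ0]
    ring



lemma call_hasDerivAt (σ T K x : ℝ) (hσ : 0 < σ) (hT : 0 < T) (hx : 0 < x) :
    HasDerivAt
      (fun x' : ℝ =>
        ∫ u, max (x' * Real.exp (σ*u - σ^2*T/2) - K) 0 ∂(gaussianReal 0 T.toNNReal))
      (∫ u, max (x * Real.exp (σ*u - σ^2*T/2) - K) 0 * (u/(x*σ*T))
        ∂(gaussianReal 0 T.toNNReal))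
      x := by
  set γ := gaussianReal 0 T.toNNReal with hγ
  set e : ℝ → ℝ := fun u => Real.exp (σ*u - σ^2*T/2) with he_def
  have hcont_e : Continuous e := by rw [he_def]; continuity
  have he_pos : ∀ u, 0 < e u := fun u => Real.exp_pos _
  have he_eq : ∀ u, e u = Real.exp (σ*u) * Real.exp (-(σ^2*T/2)) := fun u => by
    show Real.exp (σ*u - σ^2*T/2) = _
    rw [show σ*u - σ^2*T/2 = σ*u + -(σ^2*T/2) by ring, Real.exp_add]
  have hInt_e : Integrable e γ := by
    rw [hγ, γ_int_iff hT]
    refine ((integrable_gpdf_exp hT σ).const_mul (Real.exp (-(σ^2*T/2)))).congr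
      (ae_of_all _ fun u => ?_)
    simp only [he_eq]
    ring
  set F' : ℝ → ℝ := fun u => if K < x * e u then e u else 0 with hF'_def
  have hmeas : ∀ᶠ x' in 𝓝 x, AEStronglyMeasurable (fun u => max (x' * e u - K) 0) γ :=
    Eventually.of_forall fun x' =>
      (((continuous_const.mul hcont_e).sub continuous_const).max
        continuous_const).aestronglyMeasurable
  have hfin : IsProbabilityMeasure γ := by rw [hγ]; infer_instance
  have hint : Integrable (fun u => max (x * e u - K) 0) γ := by
    refine ((hInt_e.const_mul x).add (integrable_const |K|)).mono'
      ((((continuous_const.mul hcont_e).sub continuous_const).max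
        continuous_const).aestronglyMeasurable) (ae_of_all _ fun u => ?_)
    rw [Real.norm_eq_abs, abs_of_nonneg (le_max_right _ _)]
    have h1 := he_pos u
    have h2 : max (x*e u - K) 0 ≤ x * e u + |K| :=
      max_le (by nlinarith [neg_abs_le K]) (by positivity)
    simpa using h2
  have hF'meas : AEStronglyMeasurable F' γ := by
    rw [hF'_def]
    exact (Measurable.ite (measurableSet_lt measurable_const
      (continuous_const.mul hcont_e).measurable) hcont_e.measurable
      measurable_const).aestronglyMeasurable
  have hlip : ∀ᵐ u ∂γ, LipschitzOnWith (Real.nnabs (e u))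
      (fun x' => max (x' * e u - K) 0) (Metric.ball x 1) := by
    refine ae_of_all _ fun u => LipschitzWith.lipschitzOnWith ?_
    refine LipschitzWith.of_dist_le_mul fun a b => ?_
    rw [Real.dist_eq, Real.dist_eq, Real.coe_nnabs]
    calc |max (a*e u - K) 0 - max (b*e u - K) 0|
        ≤ |(a*e u - K) - (b*e u - K)| := abs_max_sub_max_le_abs _ _ _
      _ = |e u| * |a - b| := by
          rw [show (a*e u - K) - (b*e u - K) = e u * (a-b) by ring, abs_mul]
  have hdiff : ∀ᵐ u ∂γ, HasDerivAt (fun x' => max (x' * e u - K) 0) (F' u) x := by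
    have hv : T.toNNReal ≠ 0 := by
      simp only [ne_eq, Real.toNNReal_eq_zero, not_le]
      exact hT
    have hsub : {u : ℝ | x * e u = K}.Subsingleton := by
      intro a ha b hb
      have hea : e a = e b := mul_left_cancel₀ hx.ne' ((mem_setOf.mp ha).trans (mem_setOf.mp hb).symm)
      have : σ*a - σ^2*T/2 = σ*b - σ^2*T/2 := Real.exp_eq_exp.mp hea
      have : σ * a = σ * b := by linarith
      exact mul_left_cancel₀ hσ.ne' this
    have hnull : γ {u : ℝ | x * e u = K} = 0 := by
      rw [hγ]
      exact gaussianReal_absolutelyContinuous 0 hv (hsub.measure_zero volume)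
    have hae : ∀ᵐ u ∂γ, x * e u ≠ K := by
      rw [ae_iff]
      simpa only [ne_eq, not_not] using hnull
    filter_upwards [hae] with u hu
    rcases hu.lt_or_gt with h | h
    · have hF'0 : F' u = 0 := by rw [hF'_def]; exact if_neg (not_lt.mpr h.le)
      rw [hF'0]
      have hopen : IsOpen {x' : ℝ | x' * e u < K} :=
        isOpen_lt (continuous_id.mul continuous_const) continuous_const
      have hev : (fun x' : ℝ => max (x' * e u - K) 0) =ᶠ[𝓝 x] fun _ => (0:ℝ) := by
        filter_upwards [hopen.mem_nhds (show x ∈ _ from h)] with a ha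
        exact max_eq_right (by linarith [mem_setOf.mp ha])
      exact (hasDerivAt_const x (0:ℝ)).congr_of_eventuallyEq hev
    · have hF'e : F' u = e u := by rw [hF'_def]; exact if_pos h
      rw [hF'e]
      have hopen : IsOpen {x' : ℝ | K < x' * e u} :=
        isOpen_lt continuous_const (continuous_id.mul continuous_const)
      have hev : (fun x' : ℝ => max (x' * e u - K) 0) =ᶠ[𝓝 x]
          fun x' => x' * e u - K := by
        filter_upwards [hopen.mem_nhds (show x ∈ _ from h)] with a ha
        exact max_eq_left (by linarith [mem_setOf.mp ha])
      exact ((hasDerivAt_mul_const (e u)).sub_const K).congr_of_eventuallyEq hev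
  obtain ⟨hF'int, hder⟩ := hasDerivAt_integral_of_dominated_loc_of_lip
    (F := fun x' u => max (x' * e u - K) 0) (Metric.ball_mem_nhds x one_pos) hmeas hint hF'meas hlip hInt_e hdiff
  have hval : ∫ u, F' u ∂γ = ∫ u, max (x * e u - K) 0 * (u/(x*σ*T)) ∂γ := by
    have hxσ : (x*σ : ℝ) ≠ 0 := by positivity
    apply mul_left_cancel₀ hxσ
    rw [← integral_const_mul, ← integral_const_mul, hγ, γ_integral_eq hT, γ_integral_eq hT]
    calc ∫ u, gpdf T u * (x*σ*F' u)
        = ∫ u, (if K < x * e u then x*σ*e u else 0) * gpdf T u := by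
          congr 1
          funext u
          simp only [hF'_def]
          by_cases h : K < x * e u
          · rw [if_pos h, if_pos h]
            ring
          · rw [if_neg h, if_neg h]
            ring
      _ = ∫ u, max (x * e u - K) 0 * (u/T) * gpdf T u := ibp σ T K x hσ hT hx
      _ = ∫ u, gpdf T u * (x*σ*(max (x * e u - K) 0 * (u/(x*σ*T)))) := by
          congr 1
          funext u
          rw [show x*σ*(max (x * e u - K) 0 * (u/(x*σ*T))) = max (x * e u - K) 0 * (u/T) by
            field_simp]
          ring
  exact hval ▸ hder


/-- **Cross-gamma of the product call quanto option (independent model).**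
For the payoff `max(Fᴱ(x,u) − K_E, 0) · max(Fᴵ(y,v) − K_I, 0)`, the price
`C(x,y)` has a mixed second partial derivative `∂²C/∂x∂y` at every `x > 0`, `y > 0`:
for each fixed `y' > 0` the map `x ↦ C(x,y')` is differentiable at `x`, and
`y' ↦ ∂C/∂x(x,y')` is differentiable at `y` with derivative given by the product
Malliavin weight `u·v / (x y σ_E σ_I T²)`. -/
theorem cross_gamma_product_call_independent
    (T σE σI : ℝ) (hT : 0 < T) (hσE : 0 < σE) (hσI : 0 < σI)
    (KE KI : ℝ) (x y : ℝ) (hx : 0 < x) (hy : 0 < y) :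
    (∀ y' : ℝ, 0 < y' →
      DifferentiableAt ℝ
        (fun x' : ℝ =>
          ∫ w : ℝ × ℝ,
            max (x' * Real.exp (σE * w.1 - σE ^ 2 * T / 2) - KE) 0 *
              max (y' * Real.exp (σI * w.2 - σI ^ 2 * T / 2) - KI) 0
            ∂((gaussianReal 0 T.toNNReal).prod (gaussianReal 0 T.toNNReal))) x) ∧
    HasDerivAt
      (fun y' : ℝ =>
        deriv
          (fun x' : ℝ =>
            ∫ w : ℝ × ℝ,
              max (x' * Real.exp (σE * w.1 - σE ^ 2 * T / 2) - KE) 0 *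
                max (y' * Real.exp (σI * w.2 - σI ^ 2 * T / 2) - KI) 0
              ∂((gaussianReal 0 T.toNNReal).prod (gaussianReal 0 T.toNNReal))) x)
      (∫ w : ℝ × ℝ,
          max (x * Real.exp (σE * w.1 - σE ^ 2 * T / 2) - KE) 0 *
            max (y * Real.exp (σI * w.2 - σI ^ 2 * T / 2) - KI) 0 *
            (w.1 * w.2 / (x * y * σE * σI * T ^ 2))
        ∂((gaussianReal 0 T.toNNReal).prod (gaussianReal 0 T.toNNReal)))
      y := by
  have hrep : ∀ x' y' : ℝ,
      (∫ w : ℝ × ℝ,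
          max (x' * Real.exp (σE * w.1 - σE ^ 2 * T / 2) - KE) 0 *
            max (y' * Real.exp (σI * w.2 - σI ^ 2 * T / 2) - KI) 0
        ∂((gaussianReal 0 T.toNNReal).prod (gaussianReal 0 T.toNNReal)))
        = (∫ u, max (x' * Real.exp (σE * u - σE ^ 2 * T / 2) - KE) 0
            ∂(gaussianReal 0 T.toNNReal)) *
          (∫ v, max (y' * Real.exp (σI * v - σI ^ 2 * T / 2) - KI) 0
            ∂(gaussianReal 0 T.toNNReal)) := fun x' y' =>
    integral_prod_mul
      (fun u => max (x' * Real.exp (σE * u - σE ^ 2 * T / 2) - KE) 0)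
      (fun v => max (y' * Real.exp (σI * v - σI ^ 2 * T / 2) - KI) 0)
  have hA := call_hasDerivAt σE T KE x hσE hT hx
  have hB := call_hasDerivAt σI T KI y hσI hT hy
  set B : ℝ → ℝ := fun y' =>
    ∫ v, max (y' * Real.exp (σI * v - σI ^ 2 * T / 2) - KI) 0 ∂(gaussianReal 0 T.toNNReal)
    with hB_def
  set DA : ℝ :=
    ∫ u, max (x * Real.exp (σE * u - σE ^ 2 * T / 2) - KE) 0 * (u/(x*σE*T))
      ∂(gaussianReal 0 T.toNNReal) with hDA_def
  set DB : ℝ :=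
    ∫ v, max (y * Real.exp (σI * v - σI ^ 2 * T / 2) - KI) 0 * (v/(y*σI*T))
      ∂(gaussianReal 0 T.toNNReal) with hDB_def
  constructor
  · intro y' _
    have heq : (fun x' : ℝ =>
        ∫ w : ℝ × ℝ,
          max (x' * Real.exp (σE * w.1 - σE ^ 2 * T / 2) - KE) 0 *
            max (y' * Real.exp (σI * w.2 - σI ^ 2 * T / 2) - KI) 0
          ∂((gaussianReal 0 T.toNNReal).prod (gaussianReal 0 T.toNNReal)))
        = fun x' => (∫ u, max (x' * Real.exp (σE * u - σE ^ 2 * T / 2) - KE) 0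
            ∂(gaussianReal 0 T.toNNReal)) * B y' := funext fun x' => hrep x' y'
    rw [heq]
    exact (hA.differentiableAt).mul_const (B y')
  · have hderiv_eq : ∀ y' : ℝ,
        deriv (fun x' : ℝ =>
          ∫ w : ℝ × ℝ,
            max (x' * Real.exp (σE * w.1 - σE ^ 2 * T / 2) - KE) 0 *
              max (y' * Real.exp (σI * w.2 - σI ^ 2 * T / 2) - KI) 0
            ∂((gaussianReal 0 T.toNNReal).prod (gaussianReal 0 T.toNNReal))) x
          = DA * B y' := by
      intro y'
      have heq : (fun x' : ℝ =>
          ∫ w : ℝ × ℝ,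
            max (x' * Real.exp (σE * w.1 - σE ^ 2 * T / 2) - KE) 0 *
              max (y' * Real.exp (σI * w.2 - σI ^ 2 * T / 2) - KI) 0
            ∂((gaussianReal 0 T.toNNReal).prod (gaussianReal 0 T.toNNReal)))
          = fun x' => (∫ u, max (x' * Real.exp (σE * u - σE ^ 2 * T / 2) - KE) 0
              ∂(gaussianReal 0 T.toNNReal)) * B y' := funext fun x' => hrep x' y'
      rw [heq]
      exact (hA.mul_const (B y')).deriv
  -- identify the target derivative value
    have hval : (∫ w : ℝ × ℝ,
        max (x * Real.exp (σE * w.1 - σE ^ 2 * T / 2) - KE) 0 *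
          max (y * Real.exp (σI * w.2 - σI ^ 2 * T / 2) - KI) 0 *
          (w.1 * w.2 / (x * y * σE * σI * T ^ 2))
        ∂((gaussianReal 0 T.toNNReal).prod (gaussianReal 0 T.toNNReal))) = DA * DB := by
      rw [hDA_def, hDB_def, ← integral_prod_mul
        (fun u => max (x * Real.exp (σE * u - σE ^ 2 * T / 2) - KE) 0 * (u/(x*σE*T)))
        (fun v => max (y * Real.exp (σI * v - σI ^ 2 * T / 2) - KI) 0 * (v/(y*σI*T)))]
      congr 1
      funext w
      have hx' : x ≠ 0 := hx.ne'
      have hy' : y ≠ 0 := hy.ne'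
      have hσE' : σE ≠ 0 := hσE.ne'
      have hσI' : σI ≠ 0 := hσI.ne'
      have hT' : T ≠ 0 := hT.ne'
      field_simp
    rw [hval, funext hderiv_eq]
    exact hB.const_mul DA
end

section
/- Temperature delta of the product call quanto option in the correlated model: for strikes K_E, K_I ∈ ℝ, the price C(x,y) = ∫∫ max(F^E(x,u) − K_E, 0)·max(F^I(y,u,v) − K_I, 0) dμ(u,v) is differentiable in y at every y > 0 with ∂C/∂y = ∫∫ max(F^E(x,u) − K_E, 0)·max(F^I(y,u,v) − K_I, 0) · v/(y·σ_I·√(1−ρ²)·T) dμ(u,v), even though the call payoff is not differentiable. -/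
open MeasureTheory ProbabilityTheory Real
open scoped NNReal ENNReal Topology

namespace QuantoAux

lemma int_exp {T' : ℝ≥0} (hT' : 0 < (T' : ℝ)) (b : ℝ) :
    Integrable (fun v : ℝ => Real.exp (b * v)) (gaussianReal 0 T') := by
  have hT0 : T' ≠ 0 := by
    intro h; rw [h] at hT'; simp at hT'
  rw [gaussianReal_of_var_ne_zero 0 hT0,
    integrable_withDensity_iff (measurable_gaussianPDF 0 T')
      (ae_of_all _ fun x => ENNReal.ofReal_lt_top)]
  have key : Integrable (fun v : ℝ => Real.exp (-(1/(2*(T':ℝ))) * (v - b*T')^2)) volume :=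
    (integrable_exp_neg_mul_sq (by positivity)).comp_sub_right (b*T')
  have heq : (fun v : ℝ => Real.exp (b * v) * (gaussianPDF 0 T' v).toReal)
      = fun v : ℝ => ((Real.sqrt (2*π*(T':ℝ)))⁻¹ * Real.exp (b^2*(T':ℝ)/2)) *
          Real.exp (-(1/(2*(T':ℝ))) * (v - b*T')^2) := by
    funext v
    have hexp : b*v + (-(v-0)^2/(2*(T':ℝ))) = b^2*(T':ℝ)/2 + (-(1/(2*(T':ℝ))) * (v - b*(T':ℝ))^2) := by
      field_simp
      ring
    calc Real.exp (b*v) * (gaussianPDF 0 T' v).toReal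
        = (Real.sqrt (2*π*(T':ℝ)))⁻¹ * Real.exp (b*v + (-(v-0)^2/(2*(T':ℝ)))) := by
          rw [gaussianPDF, ENNReal.toReal_ofReal (gaussianPDFReal_nonneg _ _ _),
            gaussianPDFReal, Real.exp_add]; ring
      _ = _ := by rw [hexp, Real.exp_add]; ring
  rw [heq]
  exact key.const_mul _

lemma int_expabs {T' : ℝ≥0} (hT' : 0 < (T' : ℝ)) (b : ℝ) :
    Integrable (fun v : ℝ => Real.exp (b * |v|)) (gaussianReal 0 T') := by
  have h := (int_exp hT' b).add (int_exp hT' (-b))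
  refine h.mono (Continuous.aestronglyMeasurable (by continuity)) (ae_of_all _ fun v => ?_)
  rw [Real.norm_eq_abs, abs_of_nonneg (Real.exp_pos _).le]
  have h1 : b * |v| ≤ |b * v| := by
    calc b * |v| ≤ |b| * |v| := mul_le_mul_of_nonneg_right (le_abs_self b) (abs_nonneg v)
      _ = |b * v| := (abs_mul b v).symm
  have h2 : Real.exp (b * |v|) ≤ Real.exp |b * v| := Real.exp_le_exp.2 h1
  have h3 : Real.exp |b * v| ≤ Real.exp (b*v) + Real.exp (-(b*v)) := by
    rcases abs_cases (b*v) with ⟨h,_⟩|⟨h,_⟩ <;> rw [h]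
    · nlinarith [Real.exp_pos (-(b*v))]
    · nlinarith [Real.exp_pos (b*v)]
  have h4 : Real.exp (b * |v|) ≤ Real.exp (b*v) + Real.exp (-b*v) := by
    rw [neg_mul]; exact le_trans h2 h3
  calc Real.exp (b * |v|) ≤ Real.exp (b*v) + Real.exp (-b*v) := h4
    _ ≤ ‖Real.exp (b*v) + Real.exp (-b*v)‖ := le_abs_self _

lemma density_shift {T' : ℝ≥0} (hT' : 0 < (T' : ℝ)) (s : ℝ) :
    gaussianReal s T' = (gaussianReal 0 T').withDensity
      (fun v => ENNReal.ofReal (Real.exp (s * (v/(T':ℝ)) - s^2/(2*(T':ℝ))))) := by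
  have hT0 : T' ≠ 0 := by intro h; rw [h] at hT'; simp at hT'
  have hmeas : Measurable (fun v : ℝ => ENNReal.ofReal (Real.exp (s * (v/(T':ℝ)) - s^2/(2*(T':ℝ))))) := by
    fun_prop
  rw [gaussianReal_of_var_ne_zero s hT0, gaussianReal_of_var_ne_zero 0 hT0,
    ← withDensity_mul _ (measurable_gaussianPDF 0 T') hmeas]
  congr 1
  funext v
  simp only [Pi.mul_apply, gaussianPDF]
  rw [← ENNReal.ofReal_mul (gaussianPDFReal_nonneg _ _ _)]
  congr 1
  rw [gaussianPDFReal, gaussianPDFReal]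
  conv_rhs => rw [mul_assoc, ← Real.exp_add]
  congr 1
  rw [Real.exp_eq_exp]
  field_simp
  ring

lemma prod_withDensity (γ : Measure ℝ) [SigmaFinite γ] {D : ℝ → ℝ≥0∞}
    (hD : Measurable D) [SigmaFinite (γ.withDensity D)] :
    γ.prod (γ.withDensity D) = (γ.prod γ).withDensity (fun w => D w.2) := by
  refine Measure.prod_eq fun s t hs ht => ?_
  rw [withDensity_apply _ (hs.prod ht), withDensity_apply _ ht, ← Measure.prod_restrict]
  calc ∫⁻ w : ℝ × ℝ, D w.2 ∂((γ.restrict s).prod (γ.restrict t))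
      = ∫⁻ w : ℝ × ℝ, (fun _ : ℝ => (1:ℝ≥0∞)) w.1 * D w.2 ∂((γ.restrict s).prod (γ.restrict t)) := by
        simp
    _ = (∫⁻ _, (1:ℝ≥0∞) ∂(γ.restrict s)) * ∫⁻ v, D v ∂(γ.restrict t) :=
        lintegral_prod_mul aemeasurable_const hD.aemeasurable
    _ = γ s * ∫⁻ v in t, D v ∂γ := by
        rw [lintegral_one, Measure.restrict_apply_univ]

lemma CM {T' : ℝ≥0} (hT' : 0 < (T' : ℝ)) (s : ℝ) (f : ℝ × ℝ → ℝ) :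
    ∫ w : ℝ × ℝ, f (w.1, w.2 + s) ∂((gaussianReal 0 T').prod (gaussianReal 0 T'))
      = ∫ w : ℝ × ℝ, f w * Real.exp (s * (w.2/(T':ℝ)) - s^2/(2*(T':ℝ)))
          ∂((gaussianReal 0 T').prod (gaussianReal 0 T')) := by
  set γ := gaussianReal 0 T' with hγ
  have hemb : MeasurableEmbedding (fun w : ℝ × ℝ => (w.1, w.2 + s)) :=
    ((MeasurableEquiv.refl ℝ).prodCongr (MeasurableEquiv.addRight s)).measurableEmbedding
  have h1 : Measure.map (fun v : ℝ => v + s) γ = gaussianReal s T' := by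
    simpa using gaussianReal_map_add_const (μ := 0) (v := T') s
  have hmap : Measure.map (fun w : ℝ × ℝ => (w.1, w.2 + s)) (γ.prod γ)
      = γ.prod (gaussianReal s T') := by
    have h2 := Measure.map_prod_map (f := (id : ℝ → ℝ)) (g := fun v : ℝ => v + s) γ γ
      measurable_id (measurable_add_const s)
    rw [Measure.map_id, h1] at h2
    exact h2.symm
  have hstep : ∫ w : ℝ × ℝ, f (w.1, w.2 + s) ∂(γ.prod γ)
      = ∫ w, f w ∂(γ.prod (gaussianReal s T')) := by
    rw [← hmap, hemb.integral_map]
  rw [hstep, density_shift hT' s]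
  set D : ℝ → ℝ≥0∞ := fun v => ENNReal.ofReal (Real.exp (s * (v/(T':ℝ)) - s^2/(2*(T':ℝ)))) with hD
  have hDmeas : Measurable D := by rw [hD]; fun_prop
  have : SigmaFinite (γ.withDensity D) := by
    rw [← density_shift hT' s]; infer_instance
  rw [prod_withDensity γ hDmeas]
  have hcoe : (fun w : ℝ × ℝ => D w.2)
      = fun w : ℝ × ℝ => ((Real.toNNReal (Real.exp (s * (w.2/(T':ℝ)) - s^2/(2*(T':ℝ)))) : ℝ≥0) : ℝ≥0∞) := rfl
  rw [hcoe, integral_withDensity_eq_integral_smul (by fun_prop) f]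
  refine integral_congr_ae (ae_of_all _ fun w => ?_)
  simp only [NNReal.smul_def, smul_eq_mul,
    Real.coe_toNNReal _ (Real.exp_pos _).le]
  ring

end QuantoAux

set_option maxHeartbeats 2000000 in
open QuantoAux in
/-- **Temperature delta of the product call quanto option (correlated model).**
For the payoff `max(Fᴱ(x,u) − K_E, 0) · max(Fᴵ(y,u,v) − K_I, 0)` with
`Fᴵ(y,u,v) = y·exp(σ_I (ρu + √(1−ρ²) v) − σ_I² T/2)`, the price is differentiable in the
initial temperature price `y > 0`, with derivative given by the Malliavin weight
`v / (y σ_I √(1−ρ²) T)` — even though the call payoff is not differentiable. -/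
theorem temperature_delta_product_call_correlated
    (T σE σI ρ : ℝ) (hT : 0 < T) (hσE : 0 < σE) (hσI : 0 < σI)
    (hρ : ρ ∈ Set.Ioo (-1 : ℝ) 1)
    (KE KI : ℝ) (x y : ℝ) (hx : 0 < x) (hy : 0 < y) :
    HasDerivAt
      (fun y' : ℝ =>
        ∫ w : ℝ × ℝ,
          max (x * Real.exp (σE * w.1 - σE ^ 2 * T / 2) - KE) 0 *
            max (y' * Real.exp (σI * (ρ * w.1 + Real.sqrt (1 - ρ ^ 2) * w.2) -
              σI ^ 2 * T / 2) - KI) 0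
          ∂((gaussianReal 0 T.toNNReal).prod (gaussianReal 0 T.toNNReal)))
      (∫ w : ℝ × ℝ,
          max (x * Real.exp (σE * w.1 - σE ^ 2 * T / 2) - KE) 0 *
            max (y * Real.exp (σI * (ρ * w.1 + Real.sqrt (1 - ρ ^ 2) * w.2) -
              σI ^ 2 * T / 2) - KI) 0 *
            (w.2 / (y * σI * Real.sqrt (1 - ρ ^ 2) * T))
        ∂((gaussianReal 0 T.toNNReal).prod (gaussianReal 0 T.toNNReal)))
      y := by
  obtain ⟨hρ1, hρ2⟩ := hρ
  have hρsq : ρ ^ 2 < 1 := by nlinarith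
  set β : ℝ := Real.sqrt (1 - ρ ^ 2) with hβdef
  have hβ : 0 < β := Real.sqrt_pos.2 (by nlinarith)
  have ha : 0 < σI * β := by positivity
  have hTc : ((T.toNNReal : ℝ≥0) : ℝ) = T := Real.coe_toNNReal T hT.le
  have hT' : 0 < ((T.toNNReal : ℝ≥0) : ℝ) := by rw [hTc]; exact hT
  set μ : Measure (ℝ × ℝ) := (gaussianReal 0 T.toNNReal).prod (gaussianReal 0 T.toNNReal) with hμ
  set P : ℝ × ℝ → ℝ := fun w =>
    max (x * Real.exp (σE * w.1 - σE ^ 2 * T / 2) - KE) 0 *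
      max (y * Real.exp (σI * (ρ * w.1 + β * w.2) - σI ^ 2 * T / 2) - KI) 0 with hP
  set s : ℝ → ℝ := fun z => Real.log (z / y) / (σI * β) with hs_def
  set F : ℝ → ℝ × ℝ → ℝ := fun z w =>
    P w * Real.exp (s z * (w.2 / T) - (s z) ^ 2 / (2 * T)) with hF
  set F' : ℝ → ℝ × ℝ → ℝ := fun z w =>
    P w * Real.exp (s z * (w.2 / T) - (s z) ^ 2 / (2 * T)) *
      ((w.2 / T - s z / T) * (1 / (z * (σI * β)))) with hF'
  have hsy : s y = 0 := by simp [hs_def, div_self hy.ne']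
  have hPcont : Continuous P := by rw [hP]; fun_prop
  have hPnn : ∀ w, 0 ≤ P w := fun w => mul_nonneg (le_max_right _ _) (le_max_right _ _)
  set S : ℝ := Real.log 2 / (σI * β) with hSdef
  have hS : 0 ≤ S := div_nonneg (Real.log_nonneg one_le_two) ha.le
  have hball : ∀ z ∈ Metric.ball y (y / 2), y / 2 < z ∧ z < 3 * y / 2 := by
    intro z hz
    rw [Metric.mem_ball, Real.dist_eq, abs_lt] at hz
    constructor <;> linarith [hz.1, hz.2]
  have hsz_bound : ∀ z ∈ Metric.ball y (y / 2), |s z| ≤ S := by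
    intro z hz
    obtain ⟨h1, h2⟩ := hball z hz
    have hz0 : 0 < z := by linarith
    have hub : Real.log (z / y) ≤ Real.log 2 := by
      apply Real.log_le_log (by positivity)
      rw [div_le_iff₀ hy]; linarith
    have hlb : -Real.log 2 ≤ Real.log (z / y) := by
      rw [← Real.log_inv]
      apply Real.log_le_log (by norm_num)
      rw [le_div_iff₀ hy]; norm_num; linarith
    rw [hs_def]
    simp only []
    rw [abs_div, abs_of_pos ha, hSdef]
    gcongr
    exact abs_le.2 ⟨hlb, hub⟩
  have hP1 : ∀ u : ℝ, max (x * Real.exp (σE * u - σE ^ 2 * T / 2) - KE) 0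
      ≤ (x + |KE|) * Real.exp (σE * |u|) := by
    intro u
    have e1 : Real.exp (σE * u - σE ^ 2 * T / 2) ≤ Real.exp (σE * |u|) := by
      apply Real.exp_le_exp.2
      have h1 : σE * u ≤ σE * |u| := mul_le_mul_of_nonneg_left (le_abs_self u) hσE.le
      nlinarith [mul_nonneg (sq_nonneg σE) hT.le]
    have e2 : (1 : ℝ) ≤ Real.exp (σE * |u|) := Real.one_le_exp (by positivity)
    apply max_le _ (by positivity)
    nlinarith [mul_le_mul_of_nonneg_left e1 hx.le,
      mul_le_mul_of_nonneg_left e2 (abs_nonneg KE), neg_le_abs KE]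
  have hP2 : ∀ u v : ℝ, max (y * Real.exp (σI * (ρ * u + β * v) - σI ^ 2 * T / 2) - KI) 0
      ≤ (y + |KI|) * Real.exp (|σI * ρ| * |u| + (σI * β) * |v|) := by
    intro u v
    have e1 : Real.exp (σI * (ρ * u + β * v) - σI ^ 2 * T / 2)
        ≤ Real.exp (|σI * ρ| * |u| + (σI * β) * |v|) := by
      apply Real.exp_le_exp.2
      have h1 : σI * ρ * u ≤ |σI * ρ| * |u| := by
        calc σI * ρ * u ≤ |σI * ρ * u| := le_abs_self _
          _ = |σI * ρ| * |u| := abs_mul _ _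
      have h2 : σI * β * v ≤ σI * β * |v| := mul_le_mul_of_nonneg_left (le_abs_self v) ha.le
      nlinarith [mul_nonneg (sq_nonneg σI) hT.le]
    have e2 : (1 : ℝ) ≤ Real.exp (|σI * ρ| * |u| + (σI * β) * |v|) :=
      Real.one_le_exp (by positivity)
    apply max_le _ (by positivity)
    nlinarith [mul_le_mul_of_nonneg_left e1 hy.le,
      mul_le_mul_of_nonneg_left e2 (abs_nonneg KI), neg_le_abs KI]
  have hPb : ∀ w : ℝ × ℝ, P w ≤ ((x + |KE|) * Real.exp (σE * |w.1|)) *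
      ((y + |KI|) * Real.exp (|σI * ρ| * |w.1| + (σI * β) * |w.2|)) := by
    intro w
    exact mul_le_mul (hP1 w.1) (hP2 w.1 w.2) (le_max_right _ _) (by positivity)
  -- integrability of P
  have hPint : Integrable P μ := by
    have hu : Integrable (fun u : ℝ => ((x + |KE|) * (y + |KI|)) *
        (Real.exp (σE * |u|) * Real.exp (|σI * ρ| * |u|))) (gaussianReal 0 T.toNNReal) := by
      have heq : (fun u : ℝ => ((x + |KE|) * (y + |KI|)) *
          (Real.exp (σE * |u|) * Real.exp (|σI * ρ| * |u|)))
          = fun u => ((x + |KE|) * (y + |KI|)) * Real.exp ((σE + |σI * ρ|) * |u|) := by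
        funext u; rw [← Real.exp_add]; ring_nf
      rw [heq]; exact (int_expabs hT' _).const_mul _
    have hv : Integrable (fun v : ℝ => Real.exp ((σI * β) * |v|)) (gaussianReal 0 T.toNNReal) :=
      int_expabs hT' _
    have hint := hu.mul_prod hv
    rw [← hμ] at hint
    refine hint.mono hPcont.aestronglyMeasurable (ae_of_all _ fun w => ?_)
    rw [Real.norm_eq_abs, abs_of_nonneg (hPnn w)]
    have hle : P w ≤ ((x + |KE|) * (y + |KI|)) *
        (Real.exp (σE * |w.1|) * Real.exp (|σI * ρ| * |w.1|)) * Real.exp ((σI * β) * |w.2|) := by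
      calc P w ≤ ((x + |KE|) * Real.exp (σE * |w.1|)) *
          ((y + |KI|) * Real.exp (|σI * ρ| * |w.1| + (σI * β) * |w.2|)) := hPb w
        _ = _ := by rw [Real.exp_add]; ring
    exact hle.trans (le_abs_self _)
  set bound : ℝ × ℝ → ℝ := fun w =>
    ((x + |KE|) * (y + |KI|) * (Real.exp (σE * |w.1|) * Real.exp (|σI * ρ| * |w.1|))) *
    (((1 + S) / T * (2 / (y * (σI * β)))) *
      (Real.exp ((σI * β) * |w.2|) * (Real.exp ((S / T) * |w.2|) * Real.exp |w.2|))) with hbound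
  have hbound_int : Integrable bound μ := by
    rw [hbound, hμ]
    have h1 : Integrable (fun u : ℝ => (x + |KE|) * (y + |KI|) *
        (Real.exp (σE * |u|) * Real.exp (|σI * ρ| * |u|))) (gaussianReal 0 T.toNNReal) := by
      have heq : (fun u : ℝ => (x + |KE|) * (y + |KI|) *
          (Real.exp (σE * |u|) * Real.exp (|σI * ρ| * |u|)))
          = fun u => ((x + |KE|) * (y + |KI|)) * Real.exp ((σE + |σI * ρ|) * |u|) := by
        funext u; rw [← Real.exp_add]; ring_nf
      rw [heq]; exact (int_expabs hT' _).const_mul _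
    have h2 : Integrable (fun v : ℝ => (1 + S) / T * (2 / (y * (σI * β))) *
        (Real.exp ((σI * β) * |v|) * (Real.exp ((S / T) * |v|) * Real.exp |v|)))
        (gaussianReal 0 T.toNNReal) := by
      have heq : (fun v : ℝ => (1 + S) / T * (2 / (y * (σI * β))) *
          (Real.exp ((σI * β) * |v|) * (Real.exp ((S / T) * |v|) * Real.exp |v|)))
          = fun v => ((1 + S) / T * (2 / (y * (σI * β)))) *
            Real.exp ((σI * β + S / T + 1) * |v|) := by
        funext v; rw [← Real.exp_add, ← Real.exp_add]; ring_nf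
      rw [heq]; exact (int_expabs hT' _).const_mul _
    exact h1.mul_prod h2
  have h_bound : ∀ᵐ w ∂μ, ∀ z ∈ Metric.ball y (y / 2), ‖F' z w‖ ≤ bound w := by
    refine ae_of_all _ fun w z hz => ?_
    obtain ⟨hz1, hz2⟩ := hball z hz
    have hz0 : 0 < z := by linarith
    have hsz := hsz_bound z hz
    have hEpos := (Real.exp_pos (s z * (w.2 / T) - (s z) ^ 2 / (2 * T))).le
    have hE : Real.exp (s z * (w.2 / T) - (s z) ^ 2 / (2 * T))
        ≤ Real.exp ((S / T) * |w.2|) := by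
      apply Real.exp_le_exp.2
      have h1 : s z * w.2 ≤ S * |w.2| := by
        calc s z * w.2 ≤ |s z * w.2| := le_abs_self _
          _ = |s z| * |w.2| := abs_mul _ _
          _ ≤ S * |w.2| := mul_le_mul_of_nonneg_right hsz (abs_nonneg _)
      have h2 : (0 : ℝ) ≤ (s z) ^ 2 / (2 * T) := by positivity
      calc s z * (w.2 / T) - (s z) ^ 2 / (2 * T) ≤ s z * (w.2 / T) := by linarith
        _ = (s z * w.2) / T := by ring
        _ ≤ (S * |w.2|) / T := by gcongr
        _ = (S / T) * |w.2| := by ring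
    have hQ : |w.2 / T - s z / T| ≤ (1 + S) * Real.exp |w.2| / T := by
      have h1 : |w.2 / T - s z / T| = |w.2 - s z| / T := by
        rw [div_sub_div_same, abs_div, abs_of_pos hT]
      have h2 : |w.2 - s z| ≤ |w.2| + S := by
        have := abs_sub (w.2) (s z)
        calc |w.2 - s z| ≤ |w.2| + |s z| := abs_sub _ _
          _ ≤ |w.2| + S := by linarith
      have h3 : |w.2| + S ≤ (1 + S) * Real.exp |w.2| := by
        nlinarith [Real.add_one_le_exp |w.2|, Real.one_le_exp (abs_nonneg w.2), abs_nonneg w.2]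
      rw [h1]
      calc |w.2 - s z| / T ≤ (|w.2| + S) / T := by gcongr
        _ ≤ (1 + S) * Real.exp |w.2| / T := by gcongr
    have hR : 1 / (z * (σI * β)) ≤ 2 / (y * (σI * β)) := by
      rw [div_le_div_iff₀ (mul_pos hz0 ha) (by positivity)]
      have h2z : y * (σI * β) ≤ 2 * z * (σI * β) :=
        mul_le_mul_of_nonneg_right (by linarith) ha.le
      linarith
    have hRnn : (0 : ℝ) ≤ 1 / (z * (σI * β)) := le_of_lt (one_div_pos.2 (mul_pos hz0 ha))
    simp only [hF']
    rw [Real.norm_eq_abs]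
    have habs : |P w * Real.exp (s z * (w.2 / T) - (s z) ^ 2 / (2 * T)) *
        ((w.2 / T - s z / T) * (1 / (z * (σI * β))))|
        = P w * Real.exp (s z * (w.2 / T) - (s z) ^ 2 / (2 * T)) *
          (|w.2 / T - s z / T| * (1 / (z * (σI * β)))) := by
      rw [abs_mul (P w * Real.exp (s z * (w.2 / T) - (s z) ^ 2 / (2 * T)))
          ((w.2 / T - s z / T) * (1 / (z * (σI * β)))),
        abs_mul (P w) (Real.exp (s z * (w.2 / T) - (s z) ^ 2 / (2 * T))),
        abs_mul (w.2 / T - s z / T) (1 / (z * (σI * β))),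
        abs_of_nonneg (hPnn w), abs_of_nonneg hEpos, abs_of_nonneg hRnn]
    rw [habs]
    calc P w * Real.exp (s z * (w.2 / T) - (s z) ^ 2 / (2 * T)) *
        (|w.2 / T - s z / T| * (1 / (z * (σI * β))))
        ≤ (((x + |KE|) * Real.exp (σE * |w.1|)) *
            ((y + |KI|) * Real.exp (|σI * ρ| * |w.1| + (σI * β) * |w.2|)) *
            Real.exp ((S / T) * |w.2|)) *
          (((1 + S) * Real.exp |w.2| / T) * (2 / (y * (σI * β)))) := by
          apply mul_le_mul
          · exact mul_le_mul (hPb w) hE hEpos (by positivity)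
          · exact mul_le_mul hQ hR hRnn (by positivity)
          · exact mul_nonneg (abs_nonneg _) hRnn
          · positivity
      _ = bound w := by
          simp only [hbound]
          rw [Real.exp_add]
          ring
  have hF_meas : ∀ᶠ z in 𝓝 y, AEStronglyMeasurable (F z) μ := by
    refine Filter.Eventually.of_forall fun z => ?_
    apply Continuous.aestronglyMeasurable
    simp only [hF]
    exact hPcont.mul (by fun_prop)
  have hF_int : Integrable (F y) μ := by
    have hFy : F y = P := by
      funext w
      simp only [hF, hsy]
      have h0 : (0 : ℝ) * (w.2 / T) - (0 : ℝ) ^ 2 / (2 * T) = 0 := by ring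
      rw [h0, Real.exp_zero, mul_one]
    rw [hFy]; exact hPint
  have hF'_meas : AEStronglyMeasurable (F' y) μ := by
    apply Continuous.aestronglyMeasurable
    simp only [hF']
    exact (hPcont.mul (by fun_prop)).mul (by fun_prop)
  have h_diff : ∀ᵐ w ∂μ, ∀ z ∈ Metric.ball y (y / 2), HasDerivAt (F · w) (F' z w) z := by
    refine ae_of_all _ fun w z hz => ?_
    obtain ⟨hz1, hz2⟩ := hball z hz
    have hz0 : 0 < z := by linarith
    have hlog : HasDerivAt (fun t : ℝ => Real.log (t / y)) (1 / z) z := by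
      have h1 : HasDerivAt (fun t : ℝ => t / y) (1 / y) z := by
        simpa using (hasDerivAt_id z).div_const y
      have h2 := (Real.hasDerivAt_log (ne_of_gt (div_pos hz0 hy))).comp z h1
      refine h2.congr_deriv ?_
      field_simp
    have hs' : HasDerivAt s (1 / z / (σI * β)) z := by
      rw [hs_def]; exact hlog.div_const (σI * β)
    have hg : HasDerivAt (fun t => s t * (w.2 / T) - (s t) ^ 2 / (2 * T))
        ((1 / z / (σI * β)) * (w.2 / T) - (2 * s z ^ 1 * (1 / z / (σI * β))) / (2 * T)) z :=
      (hs'.mul_const (w.2 / T)).sub ((hs'.pow 2).div_const (2 * T))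
    have H := (hg.exp).const_mul (P w)
    simp only [hF, hF']
    refine H.congr_deriv ?_
    ring
  have key := (hasDerivAt_integral_of_dominated_loc_of_deriv_le (Metric.ball_mem_nhds y (half_pos hy))
    hF_meas hF_int hF'_meas h_bound hbound_int h_diff).2
  have hF'y : F' y = fun w : ℝ × ℝ => P w * (w.2 / (y * σI * β * T)) := by
    funext w
    simp only [hF', hsy]
    have h0 : (0 : ℝ) * (w.2 / T) - (0 : ℝ) ^ 2 / (2 * T) = 0 := by ring
    rw [h0, Real.exp_zero, mul_one]
    ring
  rw [hF'y] at key
  have hEv : (fun z : ℝ => ∫ w : ℝ × ℝ,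
        max (x * Real.exp (σE * w.1 - σE ^ 2 * T / 2) - KE) 0 *
          max (z * Real.exp (σI * (ρ * w.1 + β * w.2) - σI ^ 2 * T / 2) - KI) 0 ∂μ)
      =ᶠ[𝓝 y] fun z => ∫ w, F z w ∂μ := by
    filter_upwards [Metric.ball_mem_nhds y (half_pos hy)] with z hz
    obtain ⟨hz1, hz2⟩ := hball z hz
    have hz0 : 0 < z := by linarith
    have hpt : ∀ w : ℝ × ℝ,
        max (x * Real.exp (σE * w.1 - σE ^ 2 * T / 2) - KE) 0 *
          max (z * Real.exp (σI * (ρ * w.1 + β * w.2) - σI ^ 2 * T / 2) - KI) 0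
        = P (w.1, w.2 + s z) := by
      intro w
      have harg : y * Real.exp (σI * (ρ * w.1 + β * (w.2 + s z)) - σI ^ 2 * T / 2)
          = z * Real.exp (σI * (ρ * w.1 + β * w.2) - σI ^ 2 * T / 2) := by
        rw [show σI * (ρ * w.1 + β * (w.2 + s z)) - σI ^ 2 * T / 2
            = (σI * (ρ * w.1 + β * w.2) - σI ^ 2 * T / 2) + (σI * β) * s z from by ring,
          Real.exp_add]
        have hcancel : (σI * β) * s z = Real.log (z / y) := by
          rw [hs_def]; field_simp
        rw [hcancel, Real.exp_log (div_pos hz0 hy)]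
        field_simp
      simp only [hP]
      rw [harg]
    have hCM := QuantoAux.CM hT' (s z) P
    rw [hTc, ← hμ] at hCM
    calc ∫ w : ℝ × ℝ,
        max (x * Real.exp (σE * w.1 - σE ^ 2 * T / 2) - KE) 0 *
          max (z * Real.exp (σI * (ρ * w.1 + β * w.2) - σI ^ 2 * T / 2) - KI) 0 ∂μ
        = ∫ w : ℝ × ℝ, P (w.1, w.2 + s z) ∂μ := by
          exact integral_congr_ae (ae_of_all _ fun w => hpt w)
      _ = ∫ w : ℝ × ℝ, P w * Real.exp (s z * (w.2 / T) - (s z) ^ 2 / (2 * T)) ∂μ := hCM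
      _ = ∫ w, F z w ∂μ := by simp only [hF]
  exact key.congr_of_eventuallyEq hEv
end
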